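/- arXiv:1503.04571 — 6 statements merged into one kernel-verified Lean document; each statement's English description precedes it below -/
import Mathlib

section
/- For any convex body K in R^n with inradius r(K), the packing density satisfies δ(K) ≤ (vol(K) / (r(K)^n · vol(B^n))) · δ(B^n). -/
open MeasureTheory
open scoped ENNReal

/-- A family of isometric copies `φ i '' K` forms a packing if the interiors of distinct
copies are pairwise disjoint. -/
def IsPacking {n : ℕ} (K : Set (EuclideanSpace ℝ (Fin n))) {ι : Type}
    (φ : ι → (EuclideanSpace ℝ (Fin n) ≃ᵢ EuclideanSpace ℝ (Fin n))) : Prop :=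
  Pairwise fun i j => Disjoint (interior (φ i '' K)) (interior (φ j '' K))

/-- The (upper) density of a packing: the `limsup`, as `R → ∞`, of the proportion of the
ball of radius `R` covered by the packing. -/
noncomputable def packingUpperDensity {n : ℕ} (K : Set (EuclideanSpace ℝ (Fin n))) {ι : Type}
    (φ : ι → (EuclideanSpace ℝ (Fin n) ≃ᵢ EuclideanSpace ℝ (Fin n))) : ℝ≥0∞ :=
  Filter.limsup
    (fun R : ℝ => volume ((⋃ i, φ i '' K) ∩ Metric.closedBall 0 R) /
      volume (Metric.closedBall (0 : EuclideanSpace ℝ (Fin n)) R))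
    Filter.atTop

/-- The packing density `δ(K)`: the supremum of the upper densities of all packings of `ℝⁿ`
by congruent copies of `K`. -/
noncomputable def packingDensity {n : ℕ} (K : Set (EuclideanSpace ℝ (Fin n))) : ℝ≥0∞ :=
  ⨆ (ι : Type) (φ : ι → (EuclideanSpace ℝ (Fin n) ≃ᵢ EuclideanSpace ℝ (Fin n)))
    (_ : IsPacking K φ), packingUpperDensity K φ

open Metric Filter Set
open scoped Pointwise

namespace PackingAux
variable {n : ℕ}
local notation "E" => EuclideanSpace ℝ (Fin n)

lemma inradius_spec (hn : 0 < n) (K : Set E) (hKc : IsCompact K)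
    (hKint : (interior K).Nonempty) :
    0 < sSup {ρ : ℝ | 0 ≤ ρ ∧ ∃ c : E, closedBall c ρ ⊆ K} ∧
    ∃ c₀ : E, closedBall c₀ (sSup {ρ : ℝ | 0 ≤ ρ ∧ ∃ c : E, closedBall c ρ ⊆ K}) ⊆ K := by
  haveI : Nonempty (Fin n) := ⟨⟨0, hn⟩⟩
  haveI : Nontrivial E := by
    refine nontrivial_of_ne (EuclideanSpace.single ⟨0, hn⟩ (1:ℝ)) 0 ?_
    intro h
    have := congrArg (fun v : E => v ⟨0, hn⟩) h
    simp at this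
  set S := {ρ : ℝ | 0 ≤ ρ ∧ ∃ c : E, closedBall c ρ ⊆ K} with hS
  obtain ⟨x₀, hx₀⟩ := hKint
  obtain ⟨ε, hε, hballε⟩ : ∃ ε > 0, ball x₀ ε ⊆ K :=
    Metric.mem_nhds_iff.1 (mem_interior_iff_mem_nhds.1 hx₀)
  have hKne : K.Nonempty := ⟨x₀, interior_subset hx₀⟩
  obtain ⟨M, hM⟩ := hKc.isBounded.subset_closedBall 0
  have hcne : Kᶜ.Nonempty := by
    obtain ⟨x, hx⟩ := NormedSpace.exists_lt_norm ℝ (EuclideanSpace ℝ (Fin n)) M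
    exact ⟨x, fun hxK => absurd (mem_closedBall_zero_iff.1 (hM hxK)) (not_le.2 hx)⟩
  set g : E → ℝ := fun c => Metric.infDist c Kᶜ with hg
  have hgcont : Continuous g := Metric.continuous_infDist_pt _
  obtain ⟨c₀, hc₀K, hmax⟩ := hKc.exists_isMaxOn hKne hgcont.continuousOn
  have key1 : ∀ (c : E) (ρ : ℝ), closedBall c ρ ⊆ K → ρ ≤ g c := by
    intro c ρ hsub
    by_contra h
    obtain ⟨y, hyK, hy⟩ := (Metric.infDist_lt_iff hcne).1 (not_le.1 h)
    exact hyK (hsub (mem_closedBall'.2 hy.le))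
  have key2 : ∀ (c : E) (ρ : ℝ), 0 < ρ → ρ ≤ g c → closedBall c ρ ⊆ K := by
    intro c ρ hρ hle
    have h1 : ball c ρ ⊆ K :=
      (ball_subset_ball hle).trans Metric.ball_infDist_compl_subset
    calc closedBall c ρ = closure (ball c ρ) := (closure_ball c hρ.ne').symm
      _ ⊆ closure K := closure_mono h1
      _ = K := hKc.isClosed.closure_eq
  have hhalf : ε/2 ∈ S :=
    ⟨by positivity, x₀, (closedBall_subset_ball (half_lt_self hε)).trans hballε⟩
  have bound : ∀ ρ ∈ S, ρ ≤ g c₀ := by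
    rintro ρ ⟨hρ0, c, hc⟩
    exact (key1 c ρ hc).trans (hmax (hc (mem_closedBall_self hρ0)))
  have hT0 : 0 < g c₀ := by
    have h1 : ε/2 ≤ g x₀ := key1 x₀ (ε/2) ((closedBall_subset_ball (half_lt_self hε)).trans hballε)
    have h2 : g x₀ ≤ g c₀ := hmax (interior_subset hx₀)
    linarith
  have hTS : g c₀ ∈ S := ⟨hT0.le, c₀, key2 c₀ (g c₀) hT0 le_rfl⟩
  have hsup : sSup S = g c₀ :=
    le_antisymm (csSup_le ⟨_, hhalf⟩ bound) (le_csSup ⟨g c₀, bound⟩ hTS)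
  rw [hsup]
  exact ⟨hT0, c₀, key2 c₀ (g c₀) hT0 le_rfl⟩

lemma isometry_measurePreserving (f : E ≃ᵢ E) :
    MeasurePreserving f (volume : Measure E) volume := by
  have h : (f : E → E) = (fun x => x + f 0) ∘ (f.toRealLinearIsometryEquiv : E → E) := by
    funext x
    simp [Function.comp]
  rw [h]
  exact (measurePreserving_add_right volume (f 0)).comp
    f.toRealLinearIsometryEquiv.measurePreserving

lemma volume_image_isometryEquiv (f : E ≃ᵢ E) (A : Set E) :
    volume (f '' A) = volume A := by
  have himg : f '' A = f.symm ⁻¹' A := by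
    ext x
    simp only [Set.mem_image, Set.mem_preimage]
    constructor
    · rintro ⟨y, hy, rfl⟩; simpa using hy
    · intro h; exact ⟨f.symm x, h, by simp⟩
  rw [himg]
  exact (isometry_measurePreserving f.symm).measure_preimage_emb
    (f.symm.toHomeomorph.measurableEmbedding) A

lemma packingDensity_le_one (K : Set E) : packingDensity K ≤ 1 := by
  refine iSup_le fun ι => iSup_le fun φ => iSup_le fun _ => ?_
  refine Filter.limsup_le_of_le (by isBoundedDefault) (Filter.Eventually.of_forall fun R => ?_)
  refine ENNReal.div_le_of_le_mul ?_
  rw [one_mul]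
  exact measure_mono Set.inter_subset_right

lemma limsup_map' {α β : Type*} (u : β → ℝ≥0∞) (θ : α → β) (F : Filter α) :
    Filter.limsup u (Filter.map θ F) = Filter.limsup (fun x => u (θ x)) F := by
  simp [Filter.limsup_eq, Filter.eventually_map]

set_option maxHeartbeats 1000000 in
lemma main_est (hn : 0 < n) (K : Set E) (hKc : IsCompact K) (hKint : (interior K).Nonempty)
    (c₀ : E) (r : ℝ) (hr : 0 < r) (hQK : closedBall c₀ r ⊆ K)
    {ι : Type} (φ : ι → (E ≃ᵢ E)) (hφ : IsPacking K φ) :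
    packingUpperDensity K φ ≤
      volume K / (ENNReal.ofReal (r ^ n) * volume (closedBall (0:E) 1)) *
        packingDensity (closedBall (0:E) 1) := by
  haveI : Nonempty (Fin n) := ⟨⟨0, hn⟩⟩
  haveI : Nontrivial E := by
    refine nontrivial_of_ne (EuclideanSpace.single ⟨0, hn⟩ (1:ℝ)) 0 ?_
    intro h
    have := congrArg (fun v : E => v ⟨0, hn⟩) h
    simp at this
  -- basic volume facts
  set vB : ℝ≥0∞ := volume (closedBall (0:E) 1) with hvBdef
  have hvB0 : vB ≠ 0 := (measure_closedBall_pos volume (0:E) one_pos).ne'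
  have hvBtop : vB ≠ ⊤ := measure_closedBall_lt_top.ne
  set μQ : ℝ≥0∞ := ENNReal.ofReal (r ^ n) * vB with hμQdef
  have hrn : (0:ℝ) < r ^ n := pow_pos hr n
  have hμQ0 : μQ ≠ 0 := mul_ne_zero (ENNReal.ofReal_pos.2 hrn).ne' hvB0
  have hμQtop : μQ ≠ ⊤ := ENNReal.mul_ne_top ENNReal.ofReal_ne_top hvBtop
  have hballvol : ∀ (x : E) (ρ : ℝ), 0 ≤ ρ →
      volume (closedBall x ρ) = ENNReal.ofReal (ρ ^ n) * vB := by
    intro x ρ hρ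
    rw [hvBdef, Measure.addHaar_closedBall' volume x hρ, finrank_euclideanSpace_fin]
  have hopenvol : ∀ x : E, volume (ball x r) = μQ := by
    intro x
    rw [← Measure.addHaar_closedBall_eq_addHaar_ball, hballvol x r hr.le]
  -- interiors through isometries
  have him : ∀ (f : E ≃ᵢ E) (A : Set E), interior (f '' A) = f '' interior A := by
    intro f A
    rw [← f.coe_toHomeomorph, f.toHomeomorph.image_interior]
  haveI hcount : Countable ι := by
    refine Pairwise.countable_of_isOpen_disjoint hφ (fun i => isOpen_interior) (fun i => ?_)
    rw [him]
    exact hKint.image _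
  -- the rescaling maps
  set τ : E → E := fun x => c₀ + r • x with hτdef
  set σ : E → E := fun y => r⁻¹ • (y - c₀) with hσdef
  have hστ : ∀ x, σ (τ x) = x := by
    intro x; simp [hσdef, hτdef, smul_smul, inv_mul_cancel₀ hr.ne']
  have hτσ : ∀ y, τ (σ y) = y := by
    intro y; simp [hσdef, hτdef, smul_smul, mul_inv_cancel₀ hr.ne']
  have hσinj : Function.Injective σ := Function.LeftInverse.injective hτσ
  have hσdist : ∀ a b, dist (σ a) (σ b) = r⁻¹ * dist a b := by
    intro a b
    simp only [hσdef, dist_smul₀, Real.norm_eq_abs, abs_of_pos (inv_pos.2 hr), dist_sub_right]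
  have hτdist : ∀ a b, dist (τ a) (τ b) = r * dist a b := by
    intro a b
    simp only [hτdef, dist_add_left, dist_smul₀, Real.norm_eq_abs, abs_of_pos hr]
  have hσcomp : ∀ A : Set E, σ '' (τ '' A) = A := by
    intro A; rw [Set.image_image]; simp [hστ]
  have hσimg : ∀ A : Set E, σ '' A = τ ⁻¹' A := by
    intro A; ext x
    constructor
    · rintro ⟨a, ha, rfl⟩; rwa [Set.mem_preimage, hτσ]
    · intro hx; exact ⟨τ x, hx, hστ x⟩
  have hτ0 : τ 0 = c₀ := by simp [hτdef]
  have hτball : ∀ R : ℝ, τ '' closedBall 0 R = closedBall c₀ (r * R) := by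
    intro R; ext y
    simp only [Set.mem_image, Metric.mem_closedBall]
    constructor
    · rintro ⟨x, hx, rfl⟩
      calc dist (τ x) c₀ = dist (τ x) (τ 0) := by rw [hτ0]
        _ = r * dist x 0 := hτdist x 0
        _ ≤ r * R := mul_le_mul_of_nonneg_left hx hr.le
    · intro hy
      refine ⟨σ y, ?_, hτσ y⟩
      have h := hτdist (σ y) 0
      rw [hτσ, hτ0] at h
      show dist (σ y) 0 ≤ R
      exact le_of_mul_le_mul_left (by rw [← h]; exact hy) hr
  have hσball : ∀ (y : E) (ρ : ℝ), σ '' ball y ρ = ball (σ y) (r⁻¹ * ρ) := by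
    intro y ρ
    rw [hσimg]; ext x
    simp only [Set.mem_preimage, Metric.mem_ball]
    have : dist (τ x) y = r * dist x (σ y) := by
      conv_lhs => rw [← hτσ y]
      exact hτdist x (σ y)
    rw [this, inv_mul_eq_div, lt_div_iff₀ hr, mul_comm]
  -- the rescaled packing of unit balls
  set ψ : ι → (E ≃ᵢ E) := fun i =>
    ⟨⟨fun x => σ (φ i (τ x)), fun y => σ ((φ i).symm (τ y)),
      fun x => by simp [hτσ, hστ], fun y => by simp [hτσ, hστ]⟩,
     Isometry.of_dist_eq (fun a b => by
       show dist (σ (φ i (τ a))) (σ (φ i (τ b))) = dist a b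
       rw [hσdist, (φ i).dist_eq, hτdist, ← mul_assoc, inv_mul_cancel₀ hr.ne', one_mul])⟩
    with hψdef
  have hψcoe : ∀ i, ⇑(ψ i) = σ ∘ (⇑(φ i)) ∘ τ := fun i => rfl
  have hψB : ∀ (i : ι) (A : Set E), ψ i '' A = σ '' (φ i '' (τ '' A)) := by
    intro i A
    rw [hψcoe i, Set.image_comp, Set.image_comp]
  have hψB1 : ∀ i : ι, ψ i '' closedBall 0 1 = σ '' (φ i '' closedBall c₀ r) := by
    intro i
    rw [hψB, hτball 1, mul_one]
  set W : Set E := ⋃ i, φ i '' closedBall c₀ r with hWdef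
  have hUB : (⋃ i, ψ i '' closedBall 0 1) = σ '' W := by
    rw [hWdef, Set.image_iUnion]
    exact iUnion_congr hψB1
  have hψ0 : ∀ i, ψ i 0 = σ (φ i c₀) := by
    intro i
    rw [hψcoe i]
    simp [Function.comp, hτ0]
  -- interior of small balls sit inside interiors of copies of K
  have hballint : ∀ i : ι, ball (φ i c₀) r ⊆ interior (φ i '' K) := by
    intro i
    rw [him]
    have h1 : ball (φ i c₀) r = φ i '' ball c₀ r := ((φ i).image_ball c₀ r).symm
    rw [h1]
    refine Set.image_mono ?_
    calc ball c₀ r = interior (closedBall c₀ r) := (interior_closedBall c₀ hr.ne').symm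
      _ ⊆ interior K := interior_mono hQK
  have hint : ∀ i : ι, interior (ψ i '' closedBall 0 1) = σ '' ball (φ i c₀) r := by
    intro i
    rw [him (ψ i), interior_closedBall (0:E) one_ne_zero, (ψ i).image_ball, hψ0 i,
      hσball (φ i c₀) r, inv_mul_cancel₀ hr.ne']
  have hpack : IsPacking (closedBall (0:E) 1) ψ := by
    intro i j hij
    rw [hint i, hint j]
    rw [Set.disjoint_image_iff hσinj]
    exact Disjoint.mono (hballint i) (hballint j) (hφ hij)
  -- volume scaling under σ
  have hσvol : ∀ X : Set E, volume (σ '' X) = ENNReal.ofReal (r⁻¹ ^ n) * volume X := by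
    intro X
    have h1 : σ '' X = r⁻¹ • ((fun y => y - c₀) '' X) := by
      rw [← Set.image_smul, Set.image_image]
    have h2 : (fun y : E => y - c₀) '' X = (fun z : E => c₀ + z) ⁻¹' X := by
      ext z
      simp only [Set.mem_image, Set.mem_preimage]
      constructor
      · rintro ⟨y, hy, rfl⟩; simpa [add_sub_cancel] using hy
      · intro hz; exact ⟨c₀ + z, hz, by abel⟩
    rw [h1, Measure.addHaar_smul, finrank_euclideanSpace_fin, h2,
      measure_preimage_add volume c₀ X, abs_of_pos (pow_pos (inv_pos.2 hr) n)]
  -- the density function of the rescaled packing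
  set G : ℝ → ℝ≥0∞ := fun R =>
    volume ((⋃ i, ψ i '' closedBall 0 1) ∩ closedBall 0 R) / volume (closedBall (0:E) R)
    with hGdef
  have hrinv0 : ENNReal.ofReal (r⁻¹ ^ n) ≠ 0 :=
    (ENNReal.ofReal_pos.2 (pow_pos (inv_pos.2 hr) n)).ne'
  have hcbσ : ∀ R : ℝ, closedBall (0:E) R = σ '' closedBall c₀ (r * R) := by
    intro R
    rw [← hτball R, hσcomp]
  have hG : ∀ R : ℝ,
      G R = volume (W ∩ closedBall c₀ (r * R)) / volume (closedBall c₀ (r * R)) := by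
    intro R
    have hnum : (⋃ i, ψ i '' closedBall 0 1) ∩ closedBall 0 R
        = σ '' (W ∩ closedBall c₀ (r * R)) := by
      rw [hUB]
      conv_lhs => rw [hcbσ R]
      rw [← Set.image_inter hσinj]
    show volume ((⋃ i, ψ i '' closedBall 0 1) ∩ closedBall 0 R) / volume (closedBall (0:E) R)
      = _
    rw [hnum, hσvol]
    conv_lhs => rw [hcbσ R, hσvol]
    rw [ENNReal.mul_div_mul_left _ _ hrinv0 ENNReal.ofReal_ne_top]
  -- geometry constants
  obtain ⟨d, hd⟩ := hKc.isBounded.subset_closedBall c₀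
  have hc₀K : c₀ ∈ K := hQK (mem_closedBall_self hr.le)
  have hd0 : 0 ≤ d := by
    have := hd hc₀K
    simpa using this
  set D : ℝ := d + r + ‖c₀‖ with hDdef
  have hD0 : 0 ≤ D := by
    have := norm_nonneg c₀
    simp only [hDdef]
    linarith
  -- the key measure estimate
  have hkey : ∀ R : ℝ, volume ((⋃ i, φ i '' K) ∩ closedBall 0 R) ≤
      (volume K / μQ) * volume (W ∩ closedBall c₀ (R + D)) := by
    intro R
    set S : Set ι := {i | ((φ i '' K) ∩ closedBall 0 R).Nonempty} with hSdef
    have hsub1 : (⋃ i, φ i '' K) ∩ closedBall 0 R ⊆ ⋃ i ∈ S, φ i '' K := by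
      rintro x ⟨hx1, hx2⟩
      obtain ⟨i, hi⟩ := Set.mem_iUnion.1 hx1
      exact Set.mem_biUnion (⟨x, hi, hx2⟩ : ((φ i '' K) ∩ closedBall 0 R).Nonempty) hi
    have h1 : volume ((⋃ i, φ i '' K) ∩ closedBall 0 R) ≤ ∑' i : S, volume (φ (i:ι) '' K) :=
      (measure_mono hsub1).trans (measure_biUnion_le volume S.to_countable _)
    have h2 : ∀ i : S, volume (φ (i:ι) '' K)
        = (volume K / μQ) * volume (ball (φ (i:ι) c₀) r) := by
      intro i
      rw [volume_image_isometryEquiv, hopenvol, ENNReal.div_mul_cancel hμQ0 hμQtop]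
    have h3 : ∑' i : S, volume (φ (i:ι) '' K)
        = (volume K / μQ) * ∑' i : S, volume (ball (φ (i:ι) c₀) r) := by
      rw [← ENNReal.tsum_mul_left]
      exact tsum_congr h2
    have h4 : ∑' i : S, volume (ball (φ (i:ι) c₀) r)
        = volume (⋃ i ∈ S, ball (φ i c₀) r) := by
      rw [Set.biUnion_eq_iUnion]
      refine (measure_iUnion ?_ (fun i => measurableSet_ball)).symm
      intro i j hij
      have hne : (i:ι) ≠ (j:ι) := fun h => hij (Subtype.ext h)
      exact Disjoint.mono (hballint i) (hballint j) (hφ hne)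
    have h5 : (⋃ i ∈ S, ball (φ i c₀) r) ⊆ W ∩ closedBall c₀ (R + D) := by
      refine Set.iUnion₂_subset fun i hi => ?_
      obtain ⟨x, hxK, hxR⟩ := hi
      obtain ⟨k, hkK, rfl⟩ := hxK
      refine Set.subset_inter ?_ ?_
      · refine ball_subset_closedBall.trans ?_
        rw [← (φ i).image_closedBall c₀ r]
        exact Set.subset_iUnion (fun j => φ j '' closedBall c₀ r) i
      · intro y hy
        have ht : dist y c₀ ≤ dist y (φ i c₀) + dist (φ i c₀) (φ i k) + dist (φ i k) c₀ :=
          dist_triangle4 y (φ i c₀) (φ i k) c₀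
        have e1 : dist y (φ i c₀) ≤ r := (mem_ball.1 hy).le
        have e2 : dist (φ i c₀) (φ i k) ≤ d := by
          rw [(φ i).dist_eq, dist_comm]
          exact mem_closedBall.1 (hd hkK)
        have e3 : dist (φ i k) c₀ ≤ R + ‖c₀‖ := by
          have := dist_triangle (φ i k) 0 c₀
          have h1 : dist (φ i k) (0:E) ≤ R := mem_closedBall.1 hxR
          have h2 : dist (0:E) c₀ = ‖c₀‖ := by rw [dist_comm, dist_zero_right]
          linarith
        rw [mem_closedBall]
        simp only [hDdef]
        linarith
    calc volume ((⋃ i, φ i '' K) ∩ closedBall 0 R)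
        ≤ ∑' i : S, volume (φ (i:ι) '' K) := h1
      _ = (volume K / μQ) * ∑' i : S, volume (ball (φ (i:ι) c₀) r) := h3
      _ = (volume K / μQ) * volume (⋃ i ∈ S, ball (φ i c₀) r) := by rw [h4]
      _ ≤ (volume K / μQ) * volume (W ∩ closedBall c₀ (R + D)) :=
          mul_le_mul_right (measure_mono h5) _
  -- analytic conclusion
  set F : ℝ → ℝ≥0∞ := fun R =>
    volume ((⋃ i, φ i '' K) ∩ closedBall 0 R) / volume (closedBall (0:E) R) with hFdef
  set C : ℝ≥0∞ := volume K / μQ with hCdef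
  have hCtop : C ≠ ⊤ := (ENNReal.div_lt_top hKc.measure_lt_top.ne hμQ0).ne
  have hmid : ∀ a b c : ℝ≥0∞, b ≠ 0 → b ≠ ⊤ → a / c = a / b * (b / c) := by
    intro a b c hb hb'
    rw [div_eq_mul_inv a c, div_eq_mul_inv a b, div_eq_mul_inv b c]
    calc a * c⁻¹ = a * (b⁻¹ * b) * c⁻¹ := by rw [ENNReal.inv_mul_cancel hb hb', mul_one]
      _ = a * b⁻¹ * (b * c⁻¹) := by ring
  have hFG : ∀ R : ℝ, 1 ≤ R → F R ≤
      C * (ENNReal.ofReal ((R + D) ^ n) / ENNReal.ofReal (R ^ n)) * G ((R + D) / r) := by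
    intro R hR1
    have hR0 : (0:ℝ) < R := lt_of_lt_of_le one_pos hR1
    have hRD : (0:ℝ) < R + D := by linarith
    have hrθ : r * ((R + D) / r) = R + D := by field_simp
    have hcb0 : volume (closedBall c₀ (R + D)) ≠ 0 := (measure_closedBall_pos volume c₀ hRD).ne'
    have hcbt : volume (closedBall c₀ (R + D)) ≠ ⊤ := measure_closedBall_lt_top.ne
    calc F R ≤ (C * volume (W ∩ closedBall c₀ (R + D))) / volume (closedBall (0:E) R) :=
          ENNReal.div_le_div_right (hkey R) _
      _ = C * (volume (W ∩ closedBall c₀ (R + D)) / volume (closedBall (0:E) R)) := by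
          rw [div_eq_mul_inv, div_eq_mul_inv, mul_assoc]
      _ = C * (volume (W ∩ closedBall c₀ (R + D)) / volume (closedBall c₀ (R + D)) *
            (volume (closedBall c₀ (R + D)) / volume (closedBall (0:E) R))) := by
          rw [← hmid _ _ _ hcb0 hcbt]
      _ = C * (G ((R + D) / r) *
            (ENNReal.ofReal ((R + D) ^ n) / ENNReal.ofReal (R ^ n))) := by
          rw [hG ((R + D) / r), hrθ, hballvol c₀ (R + D) hRD.le, hballvol 0 R hR0.le,
            ENNReal.mul_div_mul_right _ _ hvB0 hvBtop]
      _ = C * (ENNReal.ofReal ((R + D) ^ n) / ENNReal.ofReal (R ^ n)) * G ((R + D) / r) := by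
          ring
  have hδ1 : packingDensity (closedBall (0:E) 1) ≤ 1 := packingDensity_le_one _
  have hψle : Filter.limsup G Filter.atTop ≤ packingDensity (closedBall (0:E) 1) := by
    have h0 : Filter.limsup G Filter.atTop = packingUpperDensity (closedBall (0:E) 1) ψ := rfl
    rw [h0]
    calc packingUpperDensity (closedBall (0:E) 1) ψ
        ≤ ⨆ (_ : IsPacking (closedBall (0:E) 1) ψ),
            packingUpperDensity (closedBall (0:E) 1) ψ :=
          le_iSup (fun _ : IsPacking (closedBall (0:E) 1) ψ =>
            packingUpperDensity (closedBall (0:E) 1) ψ) hpack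
      _ ≤ ⨆ (φ' : ι → (E ≃ᵢ E)) (_ : IsPacking (closedBall (0:E) 1) φ'),
            packingUpperDensity (closedBall (0:E) 1) φ' :=
          le_iSup (fun φ' => ⨆ (_ : IsPacking (closedBall (0:E) 1) φ'),
            packingUpperDensity (closedBall (0:E) 1) φ') ψ
      _ ≤ packingDensity (closedBall (0:E) 1) :=
          le_iSup (fun ι' : Type => ⨆ (φ' : ι' → (E ≃ᵢ E))
            (_ : IsPacking (closedBall (0:E) 1) φ'),
            packingUpperDensity (closedBall (0:E) 1) φ') ι
  have hεbound : ∀ ε : ℝ, 0 < ε →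
      packingUpperDensity K φ ≤
        C * packingDensity (closedBall (0:E) 1) * ENNReal.ofReal (1 + ε) := by
    intro ε hε
    set θ : ℝ → ℝ := fun R => (R + D) / r with hθdef
    have hθtendsto : Filter.Tendsto θ Filter.atTop Filter.atTop :=
      (tendsto_atTop_add_const_right Filter.atTop D Filter.tendsto_id).atTop_div_const hr
    have hmapθ : Filter.map θ Filter.atTop = Filter.atTop := by
      refine le_antisymm hθtendsto ?_
      have hinv : Filter.Tendsto (fun x : ℝ => r * x - D) Filter.atTop Filter.atTop := by
        have h1 : Filter.Tendsto (fun x : ℝ => r * x) Filter.atTop Filter.atTop :=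
          Filter.Tendsto.const_mul_atTop hr Filter.tendsto_id
        simpa [sub_eq_add_neg] using tendsto_atTop_add_const_right Filter.atTop (-D) h1
      have hid : θ ∘ (fun x : ℝ => r * x - D) = id := by
        funext x
        simp only [Function.comp, hθdef, id]
        field_simp
        ring
      calc Filter.atTop = Filter.map (θ ∘ fun x : ℝ => r * x - D) Filter.atTop := by
            rw [hid, Filter.map_id]
        _ = Filter.map θ (Filter.map (fun x : ℝ => r * x - D) Filter.atTop) := by
            rw [Filter.map_map]
        _ ≤ Filter.map θ Filter.atTop := Filter.map_mono hinv
    have hratio : ∀ᶠ R : ℝ in Filter.atTop,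
        ENNReal.ofReal ((R + D) ^ n) / ENNReal.ofReal (R ^ n) ≤ ENNReal.ofReal (1 + ε) := by
      have hq : Filter.Tendsto (fun R : ℝ => ((R + D) / R) ^ n) Filter.atTop (nhds 1) := by
        have h0 : Filter.Tendsto (fun R : ℝ => D / R) Filter.atTop (nhds 0) :=
          Filter.Tendsto.div_atTop tendsto_const_nhds Filter.tendsto_id
        have h1 : Filter.Tendsto (fun R : ℝ => 1 + D / R) Filter.atTop (nhds 1) := by
          simpa using (tendsto_const_nhds (x := (1:ℝ))).add h0
        have heq : ∀ᶠ R : ℝ in Filter.atTop, 1 + D / R = (R + D) / R := by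
          filter_upwards [Filter.eventually_gt_atTop (0:ℝ)] with R hR
          field_simp
        have h2 : Filter.Tendsto (fun R : ℝ => (R + D) / R) Filter.atTop (nhds 1) :=
          h1.congr' heq
        simpa using h2.pow n
      have hlt : ∀ᶠ R : ℝ in Filter.atTop, ((R + D) / R) ^ n < 1 + ε :=
        hq.eventually_lt_const (by linarith)
      filter_upwards [hlt, Filter.eventually_ge_atTop (1:ℝ)] with R hltR hR1
      have hR0 : (0:ℝ) < R := lt_of_lt_of_le one_pos hR1
      have hle : (R + D) ^ n ≤ (1 + ε) * R ^ n := by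
        have h3 : ((R + D) / R) ^ n * R ^ n ≤ (1 + ε) * R ^ n :=
          mul_le_mul_of_nonneg_right hltR.le (by positivity)
        rwa [div_pow, div_mul_cancel₀ _ (pow_ne_zero n hR0.ne')] at h3
      rw [ENNReal.div_le_iff (ENNReal.ofReal_pos.2 (pow_pos hR0 n)).ne' ENNReal.ofReal_ne_top,
        ← ENNReal.ofReal_mul (by linarith : (0:ℝ) ≤ 1 + ε)]
      exact ENNReal.ofReal_le_ofReal hle
    have hev2 : ∀ᶠ R : ℝ in Filter.atTop,
        F R ≤ C * ENNReal.ofReal (1 + ε) * G (θ R) := by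
      filter_upwards [hratio, Filter.eventually_ge_atTop (1:ℝ)] with R h1 hR1
      calc F R ≤ C * (ENNReal.ofReal ((R + D) ^ n) / ENNReal.ofReal (R ^ n)) * G ((R + D) / r) :=
            hFG R hR1
        _ ≤ C * ENNReal.ofReal (1 + ε) * G (θ R) :=
            mul_le_mul_left (mul_le_mul_right h1 C) _
    calc packingUpperDensity K φ = Filter.limsup F Filter.atTop := rfl
      _ ≤ Filter.limsup (fun R => C * ENNReal.ofReal (1 + ε) * G (θ R)) Filter.atTop :=
          Filter.limsup_le_limsup hev2
      _ = C * ENNReal.ofReal (1 + ε) * Filter.limsup (fun R => G (θ R)) Filter.atTop :=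
          ENNReal.limsup_const_mul_of_ne_top (ENNReal.mul_ne_top hCtop ENNReal.ofReal_ne_top)
      _ = C * ENNReal.ofReal (1 + ε) * Filter.limsup G Filter.atTop := by
          rw [← limsup_map' G θ Filter.atTop, hmapθ]
      _ ≤ C * ENNReal.ofReal (1 + ε) * packingDensity (closedBall (0:E) 1) :=
          mul_le_mul_right hψle _
      _ = C * packingDensity (closedBall (0:E) 1) * ENNReal.ofReal (1 + ε) := by ring
  set b : ℝ≥0∞ := C * packingDensity (closedBall (0:E) 1) with hbdef
  have hbtop : b ≠ ⊤ := ENNReal.mul_ne_top hCtop (ne_top_of_le_ne_top ENNReal.one_ne_top hδ1)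
  have hlim : Filter.Tendsto (fun k : ℕ => b * ENNReal.ofReal (1 + 1 / (k + 1)))
      Filter.atTop (nhds b) := by
    have h1 : Filter.Tendsto (fun k : ℕ => (1:ℝ) + 1 / (k + 1)) Filter.atTop (nhds 1) := by
      simpa using (tendsto_const_nhds (x := (1:ℝ))).add tendsto_one_div_add_atTop_nhds_zero_nat
    have h2 : Filter.Tendsto (fun k : ℕ => ENNReal.ofReal (1 + 1 / (k + 1)))
        Filter.atTop (nhds 1) := by
      simpa using ENNReal.tendsto_ofReal h1
    simpa using ENNReal.Tendsto.const_mul h2 (Or.inl one_ne_zero)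
  refine ge_of_tendsto hlim (Filter.Eventually.of_forall fun k => ?_)
  have hk : (0:ℝ) < 1 / (k + 1) := by positivity
  exact hεbound _ hk

end PackingAux

/-- For any convex body `K ⊆ ℝⁿ` with inradius `r(K)`, the packing density satisfies
`δ(K) ≤ (vol K / (r(K)ⁿ vol Bⁿ)) δ(Bⁿ)`. -/
theorem packingDensity_le_insphere_ratio (n : ℕ) (hn : 0 < n)
    (K : Set (EuclideanSpace ℝ (Fin n))) (hKc : IsCompact K) (hKconv : Convex ℝ K)
    (hKint : (interior K).Nonempty)
    (r : ℝ)
    (hr : r = sSup {ρ : ℝ | 0 ≤ ρ ∧ ∃ c : EuclideanSpace ℝ (Fin n),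
      Metric.closedBall c ρ ⊆ K}) :
    packingDensity K ≤
      volume K / (ENNReal.ofReal (r ^ n) *
        volume (Metric.closedBall (0 : EuclideanSpace ℝ (Fin n)) 1)) *
      packingDensity (Metric.closedBall (0 : EuclideanSpace ℝ (Fin n)) 1) := by
  obtain ⟨hrpos, c₀, hc₀⟩ := PackingAux.inradius_spec hn K hKc hKint
  rw [← hr] at hrpos hc₀
  refine iSup_le fun ι => iSup_le fun φ => iSup_le fun hφ => ?_
  exact PackingAux.main_est hn K hKc hKint c₀ r hrpos hc₀ φ hφ
end

section
/- The function f_0(r) = 1 - r²/2 for 0 ≤ r ≤ √2 and f_0(r) = 0 for r > √2 is a Blichfeldt gauge for the unit ball B^n: if {x_i} are centers of a packing of unit balls (pairwise distances ≥ 2), then ∑_i f_0(|x - x_i|) ≤ 1 for all x ∈ R^n. -/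
open MeasureTheory

/-- Blichfeldt's gauge function `f₀(r) = 1 - r²/2` for `0 ≤ r ≤ √2` and `f₀(r) = 0`
for `r > √2`. -/
noncomputable def blichfeldtF0 (r : ℝ) : ℝ :=
  if r ≤ Real.sqrt 2 then 1 - r ^ 2 / 2 else 0

open Finset in
lemma blichfeldt_double_sum {E : Type*} [NormedAddCommGroup E] [InnerProductSpace ℝ E]
    {ι : Type*} (s : Finset ι) (y : ι → E) :
    ∑ i ∈ s, ∑ j ∈ s, ‖y i - y j‖ ^ 2 ≤ 2 * s.card * ∑ i ∈ s, ‖y i‖ ^ 2 := by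
  have h1 : ∀ i j : ι, ‖y i - y j‖ ^ 2
      = ‖y i‖ ^ 2 + ‖y j‖ ^ 2 - 2 * (inner ℝ (y i) (y j) : ℝ) := by
    intro i j
    rw [norm_sub_sq_real]; ring
  have h2 : (inner ℝ (∑ i ∈ s, y i) (∑ j ∈ s, y j) : ℝ)
      = ∑ i ∈ s, ∑ j ∈ s, (inner ℝ (y i) (y j) : ℝ) := by
    rw [sum_inner]
    exact Finset.sum_congr rfl fun i _ => inner_sum _ _ _
  have key : ∑ i ∈ s, ∑ j ∈ s, ‖y i - y j‖ ^ 2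
      = 2 * s.card * ∑ i ∈ s, ‖y i‖ ^ 2 - 2 * ‖∑ i ∈ s, y i‖ ^ 2 := by
    simp only [h1, Finset.sum_sub_distrib, Finset.sum_add_distrib, Finset.sum_const,
      ← Finset.mul_sum, ← Finset.sum_mul]
    rw [← real_inner_self_eq_norm_sq, h2]
    simp only [nsmul_eq_mul, Finset.mul_sum]
    congr 1
    rw [← Finset.sum_add_distrib]
    exact Finset.sum_congr rfl fun i _ => by ring
  have hn := sq_nonneg ‖∑ i ∈ s, y i‖
  linarith

/-- `f₀` is a Blichfeldt gauge for the unit ball: if `(xᵢ)` are the centers of a packing of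
unit balls (pairwise distances at least `2`), then `∑ᵢ f₀(|x - xᵢ|) ≤ 1` for every `x ∈ ℝⁿ`. -/
theorem blichfeldtF0_gauge (n : ℕ) (c : ℕ → EuclideanSpace ℝ (Fin n))
    (hc : Pairwise fun i j => 2 ≤ dist (c i) (c j)) (x : EuclideanSpace ℝ (Fin n)) :
    (∑' i : ℕ, blichfeldtF0 (dist x (c i))) ≤ 1 := by
  classical
  set S : Set ℕ := {i | dist x (c i) ≤ Real.sqrt 2} with hS
  -- S is finite
  have hSfin : S.Finite := by
    have hcomp : IsCompact (Metric.closedBall x (Real.sqrt 2)) := isCompact_closedBall _ _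
    obtain ⟨t, ht⟩ := hcomp.elim_finite_subcover (fun y : EuclideanSpace ℝ (Fin n) => Metric.ball y 1)
      (fun y => Metric.isOpen_ball) (fun y hy => Set.mem_iUnion.2 ⟨y, Metric.mem_ball_self one_pos⟩)
    -- map each i ∈ S to some center in t whose ball contains c i
    have hmem : ∀ i ∈ S, ∃ y ∈ t, c i ∈ Metric.ball y 1 := by
      intro i hi
      have : c i ∈ Metric.closedBall x (Real.sqrt 2) := by
        rw [Metric.mem_closedBall, dist_comm]; exact hi
      have := ht this
      simpa using this
    choose! g hg1 hg2 using hmem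
    have hinj : Set.InjOn g S := by
      intro i hi j hj hij
      by_contra hne
      have h2 := hc hne
      have di := hg2 i hi
      have dj := hg2 j hj
      rw [← hij] at dj
      have : dist (c i) (c j) < 2 := by
        calc dist (c i) (c j) ≤ dist (c i) (g i) + dist (g i) (c j) := dist_triangle _ _ _
        _ < 1 + 1 := by
            rw [Metric.mem_ball] at di dj
            rw [dist_comm (g i)]
            linarith
        _ = 2 := by norm_num
      linarith
    exact Set.Finite.of_finite_image ((t.finite_toSet).subset
      (by rintro _ ⟨i, hi, rfl⟩; exact hg1 i hi)) hinj
  -- tsum is a finite sum over S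
  have hzero : ∀ i ∉ hSfin.toFinset, blichfeldtF0 (dist x (c i)) = 0 := by
    intro i hi
    simp only [Set.Finite.mem_toFinset, hS, Set.mem_setOf_eq, not_le] at hi
    exact if_neg (not_le.2 hi)
  rw [tsum_eq_sum hzero]
  set s := hSfin.toFinset with hs
  set m := s.card with hm
  have hds : ∀ i ∈ s, blichfeldtF0 (dist x (c i)) = 1 - dist x (c i) ^ 2 / 2 := by
    intro i hi
    simp only [hs, Set.Finite.mem_toFinset, hS, Set.mem_setOf_eq] at hi
    exact if_pos hi
  rw [Finset.sum_congr rfl hds]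
  rcases Nat.eq_zero_or_pos m with hm0 | hm1
  · rw [Finset.card_eq_zero] at hm0; simp [hm0]
  -- key inequality: ∑ d_i² ≥ 2(m-1)
  have hinjS : Set.InjOn c S := by
    intro i hi j hj hij
    by_contra hne
    have h2 : 2 ≤ dist (c i) (c j) := hc hne
    rw [hij, dist_self] at h2
    linarith
  have key : 2 * (m - 1 : ℝ) ≤ ∑ i ∈ s, dist x (c i) ^ 2 := by
    have hdouble := blichfeldt_double_sum s (fun i => c i - x)
    have hlhs : (4 : ℝ) * m * (m - 1) ≤ ∑ i ∈ s, ∑ j ∈ s, ‖(c i - x) - (c j - x)‖ ^ 2 := by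
      have hterm : ∀ i ∈ s, (4 : ℝ) * (m - 1) ≤ ∑ j ∈ s, ‖(c i - x) - (c j - x)‖ ^ 2 := by
        intro i hi
        have : ∑ j ∈ s, ‖(c i - x) - (c j - x)‖ ^ 2
            ≥ ∑ j ∈ s.erase i, ‖(c i - x) - (c j - x)‖ ^ 2 := by
          apply Finset.sum_le_sum_of_subset_of_nonneg (Finset.erase_subset _ _)
          intros; positivity
        refine le_trans ?_ this
        have hbound : ∀ j ∈ s.erase i, (4 : ℝ) ≤ ‖(c i - x) - (c j - x)‖ ^ 2 := by
          intro j hj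
          have hne : j ≠ i := Finset.ne_of_mem_erase hj
          have h2 : 2 ≤ dist (c i) (c j) := hc (Ne.symm hne)
          have : ‖(c i - x) - (c j - x)‖ = dist (c i) (c j) := by
            rw [sub_sub_sub_cancel_right, dist_eq_norm]
          rw [this]
          nlinarith [dist_nonneg (x := c i) (y := c j)]
        calc (4 : ℝ) * (m - 1) = ∑ _j ∈ s.erase i, (4 : ℝ) := by
              rw [Finset.sum_const, Finset.card_erase_of_mem hi, nsmul_eq_mul,
                Nat.cast_sub hm1]
              ring
          _ ≤ _ := Finset.sum_le_sum hbound
      calc (4 : ℝ) * m * (m - 1) = ∑ _i ∈ s, (4 : ℝ) * (m - 1) := by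
            rw [Finset.sum_const, nsmul_eq_mul]; ring
        _ ≤ _ := Finset.sum_le_sum hterm
    have hd : ∀ i ∈ s, ‖c i - x‖ ^ 2 = dist x (c i) ^ 2 := by
      intro i _
      rw [← dist_eq_norm, dist_comm]
    rw [Finset.sum_congr rfl hd] at hdouble
    have hmpos : (0 : ℝ) < m := by exact_mod_cast hm1
    nlinarith [hdouble, hlhs]
  have : ∑ i ∈ s, (1 - dist x (c i) ^ 2 / 2) = m - (∑ i ∈ s, dist x (c i) ^ 2) / 2 := by
    rw [Finset.sum_sub_distrib, Finset.sum_const, ← Finset.sum_div]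
    push_cast; ring
  rw [this]
  linarith
end

section
/- Blichfeldt's bound: the packing density of the unit ball satisfies δ(B^n) ≤ (n+2) · 2^{-(n+2)/2}. -/
open MeasureTheory
open Metric Set
open scoped ENNReal RealInnerProductSpace

variable {E : Type*} [NormedAddCommGroup E] [InnerProductSpace ℝ E]

/-- Blichfeldt's key lemma, finite version. -/
theorem blich_finset {ι : Type*} (c : ι → E)
    (hsep : Pairwise fun i j => 2 ≤ dist (c i) (c j)) (x : E) (s : Finset ι) :
    ∑ i ∈ s, ENNReal.ofReal (1 - ‖x - c i‖ ^ 2 / 2) ≤ 1 := by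
  classical
  set t := s.filter (fun i => ‖x - c i‖ ^ 2 < 2) with ht
  have hzero : ∀ i ∈ s, i ∉ t → ENNReal.ofReal (1 - ‖x - c i‖ ^ 2 / 2) = 0 := by
    intro i hi hit
    have h2 : ¬ ‖x - c i‖ ^ 2 < 2 := fun h => hit (Finset.mem_filter.2 ⟨hi, h⟩)
    have : (2:ℝ) ≤ ‖x - c i‖ ^ 2 := not_lt.1 h2
    apply ENNReal.ofReal_eq_zero.2; linarith
  rw [← Finset.sum_subset (Finset.filter_subset (fun i => ‖x - c i‖ ^ 2 < 2) s) hzero, ← ht]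
  have hnn : ∀ i ∈ t, 0 ≤ 1 - ‖x - c i‖ ^ 2 / 2 := by
    intro i hi
    have := (Finset.mem_filter.1 hi).2
    linarith
  rw [← ENNReal.ofReal_sum_of_nonneg hnn, ← ENNReal.ofReal_one]
  apply ENNReal.ofReal_le_ofReal
  set a : ι → E := fun i => x - c i with ha
  set k := t.card with hk
  rcases Nat.eq_zero_or_pos k with hk0 | hkpos
  · have ht0 : t = ∅ := Finset.card_eq_zero.1 (hk.symm.trans hk0)
    simp [ht0]
  · -- double sum identity
    have e1 : ∑ i ∈ t, ∑ j ∈ t, ‖a i - a j‖ ^ 2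
        = 2 * (k:ℝ) * (∑ i ∈ t, ‖a i‖ ^ 2) - 2 * ‖∑ i ∈ t, a i‖ ^ 2 := by
      have expand : ∀ i ∈ t, ∀ j ∈ t, ‖a i - a j‖ ^ 2
          = ‖a i‖ ^ 2 - 2 * ⟪a i, a j⟫ + ‖a j‖ ^ 2 := fun i _ j _ =>
        norm_sub_sq_real (a i) (a j)
      calc ∑ i ∈ t, ∑ j ∈ t, ‖a i - a j‖ ^ 2
          = ∑ i ∈ t, ∑ j ∈ t, (‖a i‖ ^ 2 - 2 * ⟪a i, a j⟫ + ‖a j‖ ^ 2) :=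
            Finset.sum_congr rfl fun i hi => Finset.sum_congr rfl fun j hj =>
              expand i hi j hj
        _ = (∑ i ∈ t, ∑ j ∈ t, ‖a i‖ ^ 2) - 2 * (∑ i ∈ t, ∑ j ∈ t, ⟪a i, a j⟫)
              + (∑ i ∈ t, ∑ j ∈ t, ‖a j‖ ^ 2) := by
            simp [Finset.sum_add_distrib, Finset.sum_sub_distrib, Finset.mul_sum]
        _ = (k:ℝ) * (∑ i ∈ t, ‖a i‖ ^ 2) - 2 * ‖∑ i ∈ t, a i‖ ^ 2
              + (k:ℝ) * (∑ j ∈ t, ‖a j‖ ^ 2) := by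
            have h1 : ∑ i ∈ t, ∑ _j ∈ t, ‖a i‖ ^ 2 = (k:ℝ) * ∑ i ∈ t, ‖a i‖ ^ 2 := by
              simp_rw [Finset.sum_const, nsmul_eq_mul]
              rw [← Finset.mul_sum]
            have h2 : ∑ _i ∈ t, ∑ j ∈ t, ‖a j‖ ^ 2 = (k:ℝ) * ∑ j ∈ t, ‖a j‖ ^ 2 := by
              rw [Finset.sum_const, nsmul_eq_mul]
            have h3 : (∑ i ∈ t, ∑ j ∈ t, ⟪a i, a j⟫) = ‖∑ i ∈ t, a i‖ ^ 2 := by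
              simp_rw [← inner_sum]
              rw [← sum_inner]
              exact real_inner_self_eq_norm_sq _
            rw [h1, h2, h3]
        _ = 2 * (k:ℝ) * (∑ i ∈ t, ‖a i‖ ^ 2) - 2 * ‖∑ i ∈ t, a i‖ ^ 2 := by ring
    have lb : 4 * ((k:ℝ) * k - k) ≤ ∑ i ∈ t, ∑ j ∈ t, ‖a i - a j‖ ^ 2 := by
      have hterm : ∀ i ∈ t, ∀ j ∈ t, (if i = j then (0:ℝ) else 4) ≤ ‖a i - a j‖ ^ 2 := by
        intro i hi j hj
        by_cases hij : i = j
        · simp [hij]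
        · simp only [hij, if_false]
          have hd : 2 ≤ dist (c i) (c j) := hsep hij
          have hij2 : a i - a j = c j - c i := by simp only [ha]; abel
          have : ‖a i - a j‖ = dist (c j) (c i) := by
            rw [hij2]; exact (dist_eq_norm _ _).symm
          rw [this]
          rw [dist_comm] at hd
          nlinarith [dist_nonneg (x := c j) (y := c i)]
      calc 4 * ((k:ℝ) * k - k)
          = ∑ i ∈ t, ∑ j ∈ t, (if i = j then (0:ℝ) else 4) := by
            have inner_eval : ∀ i ∈ t, ∑ j ∈ t, (if i = j then (0:ℝ) else 4)
                = 4 * (k:ℝ) - 4 := by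
              intro i hi
              have : ∀ j, (if i = j then (0:ℝ) else 4) = 4 - (if i = j then 4 else 0) := by
                intro j; by_cases h : i = j <;> simp [h]
              simp_rw [this, Finset.sum_sub_distrib, Finset.sum_const, Finset.sum_ite_eq,
                hi, if_true, nsmul_eq_mul, mul_comm]
              rfl
            rw [Finset.sum_congr rfl inner_eval, Finset.sum_const, nsmul_eq_mul]
            ring
        _ ≤ ∑ i ∈ t, ∑ j ∈ t, ‖a i - a j‖ ^ 2 :=
            Finset.sum_le_sum fun i hi => Finset.sum_le_sum fun j hj => hterm i hi j hj
    have hsq : (0:ℝ) ≤ ‖∑ i ∈ t, a i‖ ^ 2 := sq_nonneg _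
    have hkR : (0:ℝ) < k := by exact_mod_cast hkpos
    have hS : 2 * ((k:ℝ) - 1) ≤ ∑ i ∈ t, ‖a i‖ ^ 2 := by nlinarith [e1 ▸ lb]
    have hsum : ∑ i ∈ t, (1 - ‖x - c i‖ ^ 2 / 2)
        = (k:ℝ) - (∑ i ∈ t, ‖a i‖ ^ 2) / 2 := by
      rw [Finset.sum_sub_distrib, Finset.sum_const, nsmul_eq_mul, mul_one,
        Finset.sum_div]
    rw [hsum]; linarith

theorem blich_tsum {ι : Type*} (c : ι → E)
    (hsep : Pairwise fun i j => 2 ≤ dist (c i) (c j)) (x : E) :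
    ∑' i, ENNReal.ofReal (1 - ‖x - c i‖ ^ 2 / 2) ≤ 1 := by
  rw [ENNReal.tsum_eq_iSup_sum]
  exact iSup_le fun s => blich_finset c hsep x s

theorem blich_real_integral (n : ℕ) (hn : 1 ≤ n) :
    ∫ t in (0:ℝ)..1, Real.sqrt (2*(1-t)) ^ n
      = (2:ℝ) ^ (((n:ℝ)+2)/2) / ((n:ℝ)+2) := by
  have hxp : (0:ℝ) < (n:ℝ)/2 + 1 := by positivity
  calc ∫ t in (0:ℝ)..1, Real.sqrt (2*(1-t)) ^ n
      = ∫ t in (0:ℝ)..1, (2:ℝ) ^ ((n:ℝ)/2) * (1-t) ^ ((n:ℝ)/2) := by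
        apply intervalIntegral.integral_congr
        intro t ht
        rw [Set.uIcc_of_le zero_le_one] at ht
        have h1 : (0:ℝ) ≤ 1 - t := by linarith [ht.2]
        have h2 : (0:ℝ) ≤ 2*(1-t) := by linarith
        simp only
        rw [← Real.rpow_natCast (Real.sqrt _) n, Real.sqrt_eq_rpow, ← Real.rpow_mul h2,
          ← Real.mul_rpow (by norm_num) h1]
        norm_num
        congr 1
        ring
    _ = (2:ℝ) ^ ((n:ℝ)/2) * ∫ t in (0:ℝ)..1, (1-t) ^ ((n:ℝ)/2) :=
        intervalIntegral.integral_const_mul _ _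
    _ = (2:ℝ) ^ ((n:ℝ)/2) * ∫ s in (0:ℝ)..1, s ^ ((n:ℝ)/2) := by
        rw [intervalIntegral.integral_comp_sub_left (fun s => s ^ ((n:ℝ)/2)) 1]
        norm_num
    _ = (2:ℝ) ^ ((n:ℝ)/2) * (1 / ((n:ℝ)/2 + 1)) := by
        rw [integral_rpow (Or.inl (by linarith))]
        rw [Real.one_rpow, Real.zero_rpow (by linarith)]
        norm_num
    _ = (2:ℝ) ^ (((n:ℝ)+2)/2) / ((n:ℝ)+2) := by
        rw [show ((n:ℝ)+2)/2 = (n:ℝ)/2 + 1 by ring,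
          Real.rpow_add_one (by norm_num : (2:ℝ) ≠ 0)]
        have hn2 : ((n:ℝ) + 2) ≠ 0 := by positivity
        field_simp

theorem blich_lintegral (n : ℕ) (hn : 1 ≤ n) :
    volume (ball (0 : EuclideanSpace ℝ (Fin n)) 1) *
      ENNReal.ofReal ((2:ℝ) ^ (((n:ℝ)+2)/2) / ((n:ℝ)+2))
    ≤ ∫⁻ x : EuclideanSpace ℝ (Fin n), ENNReal.ofReal (1 - ‖x‖ ^ 2 / 2) := by
  set B := volume (ball (0 : EuclideanSpace ℝ (Fin n)) 1) with hB
  have hBtop : B ≠ ⊤ := measure_ball_lt_top.ne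
  have hof : ∀ r : ℝ, ENNReal.ofReal (max r 0) = ENNReal.ofReal r := by
    intro r
    rcases le_total r 0 with h | h
    · rw [max_eq_right h, ENNReal.ofReal_zero, eq_comm, ENNReal.ofReal_eq_zero.2 h]
    · rw [max_eq_left h]
  have hcong : ∀ x : EuclideanSpace ℝ (Fin n),
      ENNReal.ofReal (1 - ‖x‖ ^ 2 / 2) = ENNReal.ofReal (max (1 - ‖x‖ ^ 2 / 2) 0) :=
    fun x => (hof _).symm
  rw [lintegral_congr hcong]
  have hcont : Continuous fun x : EuclideanSpace ℝ (Fin n) => max (1 - ‖x‖ ^ 2 / 2) 0 :=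
    (continuous_const.sub ((continuous_norm.pow 2).div_const 2)).max continuous_const
  have key := lintegral_eq_lintegral_meas_le (μ := (volume : Measure (EuclideanSpace ℝ (Fin n))))
    (f := fun x : EuclideanSpace ℝ (Fin n) => max (1 - ‖x‖ ^ 2 / 2) 0)
    (Filter.Eventually.of_forall fun x => le_max_right _ _) hcont.aemeasurable
  rw [key]
  calc B * ENNReal.ofReal ((2:ℝ) ^ (((n:ℝ)+2)/2) / ((n:ℝ)+2))
      = ∫⁻ t in Set.Ioc (0:ℝ) 1,
          ENNReal.ofReal (Real.sqrt (2*(1-t)) ^ n) * B := by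
        have hint : IntegrableOn (fun t : ℝ => Real.sqrt (2*(1-t)) ^ n) (Set.Ioc 0 1) :=
          ((Real.continuous_sqrt.comp (by continuity)).pow n).integrableOn_Ioc
        rw [lintegral_mul_const' B _ hBtop,
          ← ofReal_integral_eq_lintegral_ofReal hint
            (Filter.Eventually.of_forall fun t => by positivity)]
        rw [← intervalIntegral.integral_of_le zero_le_one, blich_real_integral n hn]
        rw [mul_comm]
    _ ≤ ∫⁻ t in Set.Ioc (0:ℝ) 1,
          volume {x : EuclideanSpace ℝ (Fin n) | t ≤ max (1 - ‖x‖ ^ 2 / 2) 0} := by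
        apply lintegral_mono_ae
        rw [ae_restrict_iff' measurableSet_Ioc]
        filter_upwards with t ht
        have h1 : (0:ℝ) ≤ 2*(1-t) := by linarith [ht.2]
        have hsub : closedBall (0 : EuclideanSpace ℝ (Fin n)) (Real.sqrt (2*(1-t)))
            ⊆ {x : EuclideanSpace ℝ (Fin n) | t ≤ max (1 - ‖x‖ ^ 2 / 2) 0} := by
          intro x hx
          rw [mem_closedBall, dist_zero_right] at hx
          have hx2 : ‖x‖ ^ 2 ≤ 2*(1-t) := by
            calc ‖x‖ ^ 2 ≤ Real.sqrt (2*(1-t)) ^ 2 :=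
                  pow_le_pow_left₀ (norm_nonneg _) hx 2
              _ = 2*(1-t) := Real.sq_sqrt h1
          have : t ≤ 1 - ‖x‖ ^ 2 / 2 := by linarith
          exact le_max_of_le_left this
        calc ENNReal.ofReal (Real.sqrt (2*(1-t)) ^ n) * B
            = volume (closedBall (0 : EuclideanSpace ℝ (Fin n)) (Real.sqrt (2*(1-t)))) := by
              rw [Measure.addHaar_closedBall _ _ (Real.sqrt_nonneg _),
                finrank_euclideanSpace_fin]
          _ ≤ _ := measure_mono hsub
    _ ≤ ∫⁻ t in Set.Ioi (0:ℝ),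
          volume {x : EuclideanSpace ℝ (Fin n) | t ≤ max (1 - ‖x‖ ^ 2 / 2) 0} :=
        lintegral_mono_set Set.Ioc_subset_Ioi_self

/-- Blichfeldt's bound: the packing density of the unit ball in `ℝⁿ` satisfies
`δ(Bⁿ) ≤ (n+2) · 2^{-(n+2)/2}`. -/
theorem blichfeldt_ball_bound (n : ℕ) (hn : 1 ≤ n) :
    packingDensity (Metric.closedBall (0 : EuclideanSpace ℝ (Fin n)) 1) ≤
      ENNReal.ofReal (((n : ℝ) + 2) * (2 : ℝ) ^ (-(((n : ℝ) + 2) / 2))) := by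
  haveI : Nonempty (Fin n) := ⟨⟨0, hn⟩⟩
  haveI hnt : Nontrivial (EuclideanSpace ℝ (Fin n)) := inferInstance
  set T := ENNReal.ofReal (((n : ℝ) + 2) * (2 : ℝ) ^ (-(((n : ℝ) + 2) / 2))) with hT
  set kk := ENNReal.ofReal ((2:ℝ) ^ (((n:ℝ)+2)/2) / ((n:ℝ)+2)) with hkk
  have hn2 : ((n:ℝ) + 2) ≠ 0 := by positivity
  have hTk : T * kk = 1 := by
    rw [hT, hkk, ← ENNReal.ofReal_mul (by positivity)]
    rw [show (((n:ℝ)+2) * (2:ℝ) ^ (-(((n:ℝ)+2)/2))) * ((2:ℝ) ^ (((n:ℝ)+2)/2) / ((n:ℝ)+2))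
        = ((2:ℝ) ^ (-(((n:ℝ)+2)/2)) * (2:ℝ) ^ (((n:ℝ)+2)/2)) * (((n:ℝ)+2) / ((n:ℝ)+2)) by ring]
    rw [← Real.rpow_add two_pos, div_self hn2, neg_add_cancel, Real.rpow_zero,
      one_mul, ENNReal.ofReal_one]
  have hTtop : T ≠ ⊤ := ENNReal.ofReal_ne_top
  rw [packingDensity]
  apply iSup_le; intro ι; apply iSup_le; intro φ; apply iSup_le; intro hφ
  set K := Metric.closedBall (0 : EuclideanSpace ℝ (Fin n)) 1 with hK
  set c : ι → EuclideanSpace ℝ (Fin n) := fun i => φ i 0 with hc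
  have himg : ∀ i, φ i '' K = closedBall (c i) 1 := fun i =>
    (φ i).image_closedBall 0 1
  have hintr : ∀ i, interior (φ i '' K) = ball (c i) 1 := fun i => by
    rw [himg i]; exact interior_closedBall _ one_ne_zero
  have hsep : Pairwise fun i j => 2 ≤ dist (c i) (c j) := by
    intro i j hij
    by_contra hlt
    push_neg at hlt
    have hd := hφ hij
    simp only [hintr] at hd
    set m := midpoint ℝ (c i) (c j) with hm
    have h1 : dist m (c i) < 1 := by
      have := dist_midpoint_left (𝕜 := ℝ) (c i) (c j)
      rw [hm, this]
      simp only [Real.norm_ofNat]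
      rw [inv_mul_eq_div]
      linarith
    have h2 : dist m (c j) < 1 := by
      have := dist_midpoint_right (𝕜 := ℝ) (c i) (c j)
      rw [hm, this]
      simp only [Real.norm_ofNat]
      rw [inv_mul_eq_div]
      linarith
    exact Set.disjoint_left.1 hd (mem_ball.2 h1) (mem_ball.2 h2)
  haveI hcount : Countable ι := by
    apply Pairwise.countable_of_isOpen_disjoint (s := fun i => ball (c i) 1)
    · intro i j hij
      have := hφ hij
      simp only [hintr] at this
      exact this
    · intro i; exact isOpen_ball
    · intro i; exact nonempty_ball.2 one_pos
  set B := volume (ball (0 : EuclideanSpace ℝ (Fin n)) 1) with hBdef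
  set v := volume K with hv
  have hvB : v = B := Measure.addHaar_closedBall_eq_addHaar_ball _ _ _
  have hvpos : v ≠ 0 := (measure_closedBall_pos volume _ one_pos).ne'
  have hvtop : v ≠ ⊤ := measure_closedBall_lt_top.ne
  set c₀ := ∫⁻ x : EuclideanSpace ℝ (Fin n), ENNReal.ofReal (1 - ‖x‖ ^ 2 / 2) with hc₀
  have hlow : v * kk ≤ c₀ := by
    rw [hvB]; exact blich_lintegral n hn
  -- main volume bound
  have hbound : ∀ R : ℝ, 1 ≤ R →
      volume ((⋃ i, φ i '' K) ∩ Metric.closedBall 0 R)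
        ≤ T * volume (Metric.closedBall (0 : EuclideanSpace ℝ (Fin n)) (R+3)) := by
    intro R hR
    set I : Set ι := {i | ‖c i‖ ≤ R + 1} with hI
    have hsubset : (⋃ i, φ i '' K) ∩ Metric.closedBall 0 R
        ⊆ ⋃ i : I, closedBall (c (i:ι)) 1 := by
      rintro x ⟨hx1, hx2⟩
      rw [Set.mem_iUnion] at hx1
      obtain ⟨i, hxi⟩ := hx1
      rw [himg i, mem_closedBall] at hxi
      have hxR : ‖x‖ ≤ R := by
        rw [mem_closedBall, dist_zero_right] at hx2; exact hx2
      have hci : ‖c i‖ ≤ R + 1 := by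
        have h0 : dist (c i) x ≤ 1 := by rw [dist_comm]; exact hxi
        calc ‖c i‖ = dist (c i) 0 := (dist_zero_right _).symm
          _ ≤ dist (c i) x + dist x 0 := dist_triangle _ _ _
          _ ≤ 1 + R := add_le_add h0 (by rw [dist_zero_right]; exact hxR)
          _ = R + 1 := by ring
      exact Set.mem_iUnion.2 ⟨⟨i, hci⟩, mem_closedBall.2 hxi⟩
    set N := ∑' (_ : I), (1 : ℝ≥0∞) with hN
    have step1 : volume ((⋃ i, φ i '' K) ∩ Metric.closedBall 0 R) ≤ v * N := by
      calc volume ((⋃ i, φ i '' K) ∩ Metric.closedBall 0 R)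
          ≤ volume (⋃ i : I, closedBall (c (i:ι)) 1) := measure_mono hsubset
        _ ≤ ∑' i : I, volume (closedBall (c (i:ι)) 1) := measure_iUnion_le _
        _ = ∑' i : I, v := by
            refine tsum_congr fun i => ?_
            rw [hv, hK, Measure.addHaar_closedBall_center]
        _ = v * N := by rw [hN, ← ENNReal.tsum_mul_left]; simp
    have step2 : (v * kk) * N ≤ volume (Metric.closedBall (0 : EuclideanSpace ℝ (Fin n)) (R+3)) := by
      have hmeas : ∀ i : I, AEMeasurable
          (fun x : EuclideanSpace ℝ (Fin n) => ENNReal.ofReal (1 - ‖x - c (i:ι)‖ ^ 2 / 2))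
          (volume.restrict (Metric.closedBall (0 : EuclideanSpace ℝ (Fin n)) (R+3))) := by
        intro i
        exact (ENNReal.continuous_ofReal.comp
          (continuous_const.sub (((continuous_id.sub continuous_const).norm.pow 2).div_const 2))).aemeasurable
      have hsupp : ∀ i : I,
          ∫⁻ x in Metric.closedBall (0 : EuclideanSpace ℝ (Fin n)) (R+3),
            ENNReal.ofReal (1 - ‖x - c (i:ι)‖ ^ 2 / 2) = c₀ := by
        intro ⟨i, hi⟩
        have hsup : (fun x : EuclideanSpace ℝ (Fin n) =>
            ENNReal.ofReal (1 - ‖x - c i‖ ^ 2 / 2)).support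
            ⊆ Metric.closedBall (0 : EuclideanSpace ℝ (Fin n)) (R+3) := by
          intro x hx
          rw [Function.mem_support] at hx
          have hpos : 0 < 1 - ‖x - c i‖ ^ 2 / 2 := by
            by_contra hle
            push_neg at hle
            exact hx (ENNReal.ofReal_eq_zero.2 hle)
          have h2 : ‖x - c i‖ ^ 2 < 2 := by linarith
          have h2' : ‖x - c i‖ ≤ 2 := by nlinarith [norm_nonneg (x - c i)]
          rw [mem_closedBall, dist_zero_right]
          calc ‖x‖ = ‖(x - c i) + c i‖ := by rw [sub_add_cancel]
            _ ≤ ‖x - c i‖ + ‖c i‖ := norm_add_le _ _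
            _ ≤ 2 + (R + 1) := add_le_add h2' hi
            _ = R + 3 := by ring
        rw [setLIntegral_eq_of_support_subset hsup, hc₀]
        exact lintegral_sub_right_eq_self
          (fun y : EuclideanSpace ℝ (Fin n) => ENNReal.ofReal (1 - ‖y‖ ^ 2 / 2)) (c i)
      calc (v * kk) * N = ∑' (_ : I), v * kk := by
            rw [hN, ← ENNReal.tsum_mul_left]; simp
        _ ≤ ∑' i : I, c₀ := ENNReal.tsum_le_tsum fun i => hlow
        _ = ∑' i : I, ∫⁻ x in Metric.closedBall (0 : EuclideanSpace ℝ (Fin n)) (R+3),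
              ENNReal.ofReal (1 - ‖x - c (i:ι)‖ ^ 2 / 2) := by
            exact (tsum_congr hsupp).symm
        _ = ∫⁻ x in Metric.closedBall (0 : EuclideanSpace ℝ (Fin n)) (R+3),
              ∑' i : I, ENNReal.ofReal (1 - ‖x - c (i:ι)‖ ^ 2 / 2) :=
            (lintegral_tsum hmeas).symm
        _ ≤ ∫⁻ _x in Metric.closedBall (0 : EuclideanSpace ℝ (Fin n)) (R+3), 1 := by
            apply lintegral_mono
            intro x
            calc ∑' i : I, ENNReal.ofReal (1 - ‖x - c (i:ι)‖ ^ 2 / 2)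
                ≤ ∑' i : ι, ENNReal.ofReal (1 - ‖x - c i‖ ^ 2 / 2) :=
                  ENNReal.tsum_comp_le_tsum_of_injective Subtype.val_injective _
              _ ≤ 1 := blich_tsum c hsep x
        _ = volume (Metric.closedBall (0 : EuclideanSpace ℝ (Fin n)) (R+3)) := by
            rw [setLIntegral_one]
    calc volume ((⋃ i, φ i '' K) ∩ Metric.closedBall 0 R)
        ≤ v * N := step1
      _ = T * ((v * kk) * N) := by
          rw [show T * ((v * kk) * N) = (T * kk) * (v * N) by ring, hTk, one_mul]
      _ ≤ T * volume (Metric.closedBall (0 : EuclideanSpace ℝ (Fin n)) (R+3)) :=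
          mul_le_mul_right step2 T
  -- limsup estimate
  rw [packingUpperDensity]
  set q : ℝ → ℝ≥0∞ := fun R => T * (ENNReal.ofReal ((R+3)^n) / ENNReal.ofReal (R^n)) with hq
  have hvol : ∀ r : ℝ, 0 ≤ r →
      volume (Metric.closedBall (0 : EuclideanSpace ℝ (Fin n)) r)
        = ENNReal.ofReal (r^n) * v := by
    intro r hr
    rw [Measure.addHaar_closedBall' _ _ hr, finrank_euclideanSpace_fin, hv, hK]
  have hev : ∀ᶠ R in Filter.atTop,
      volume ((⋃ i, φ i '' K) ∩ Metric.closedBall 0 R) /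
        volume (Metric.closedBall (0 : EuclideanSpace ℝ (Fin n)) R) ≤ q R := by
    filter_upwards [Filter.eventually_ge_atTop (1:ℝ)] with R hR
    have h0R : (0:ℝ) ≤ R := by linarith
    calc volume ((⋃ i, φ i '' K) ∩ Metric.closedBall 0 R) /
          volume (Metric.closedBall (0 : EuclideanSpace ℝ (Fin n)) R)
        ≤ (T * volume (Metric.closedBall (0 : EuclideanSpace ℝ (Fin n)) (R+3))) /
          volume (Metric.closedBall (0 : EuclideanSpace ℝ (Fin n)) R) :=
          ENNReal.div_le_div_right (hbound R hR) _
      _ = q R := by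
          rw [hvol R h0R, hvol (R+3) (by linarith), hq]
          rw [← mul_assoc, ENNReal.mul_div_mul_right _ _ hvpos hvtop, mul_div_assoc]
  have hq1 : Filter.Tendsto q Filter.atTop (nhds T) := by
    have h1 : Filter.Tendsto (fun R : ℝ => ((R+3)/R)^n) Filter.atTop (nhds 1) := by
      have h2 : Filter.Tendsto (fun R : ℝ => 1 + 3/R) Filter.atTop (nhds 1) := by
        have h3 : Filter.Tendsto (fun R : ℝ => 3/R) Filter.atTop (nhds 0) :=
          Filter.Tendsto.div_atTop tendsto_const_nhds Filter.tendsto_id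
        have h4 := h3.const_add (1:ℝ)
        simpa using h4
      have heq : ∀ᶠ R in Filter.atTop, (1:ℝ) + 3/R = (R+3)/R := by
        filter_upwards [Filter.eventually_ge_atTop (1:ℝ)] with R hR
        have : R ≠ 0 := by linarith
        field_simp
      have h4 := h2.congr' heq
      have := h4.pow n
      simpa using this
    have h2 : Filter.Tendsto (fun R : ℝ => ENNReal.ofReal (((R+3)/R)^n))
        Filter.atTop (nhds 1) := by
      have := ENNReal.tendsto_ofReal h1
      simpa using this
    have heq2 : ∀ᶠ R in Filter.atTop,
        T * ENNReal.ofReal (((R+3)/R)^n) = q R := by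
      filter_upwards [Filter.eventually_ge_atTop (1:ℝ)] with R hR
      have hRpos : (0:ℝ) < R := by linarith
      rw [hq]
      congr 1
      rw [div_pow, ENNReal.ofReal_div_of_pos (pow_pos hRpos n)]
    have h5 := (ENNReal.Tendsto.const_mul h2 (Or.inl one_ne_zero)).congr' heq2
    simpa using h5
  exact le_trans (Filter.limsup_le_limsup hev) hq1.limsup_eq.le
end

section
/- For the Blichfeldt gauge f*(r) defined by f*(r) = 1 - r²/2 for 1 ≤ r ≤ √2, f*(r) = 1 - (1 - (2-r)²/2) = (2-r)²/2 for 0 ≤ r ≤ 1, and f*(r) = 0 for r > √2, one has I_n(f*) = (2·vol(B^n)/(n+2)) · 2^{n/2} · (1 + b_n), where b_n = 1/(2^{n/2}(n+1)) - (√2 - 1)^{n+1}(1 + √2/(n+1)). -/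
open MeasureTheory

/-- The improved Blichfeldt gauge `f*`, with `f*(r) = f₀(r)` for `r ≥ 1` and
`f*(r) = 1 - f₀(2 - r)` for `0 ≤ r ≤ 1`. -/
noncomputable def blichfeldtFStar (r : ℝ) : ℝ :=
  if r ≤ 1 then 1 - blichfeldtF0 (2 - r) else blichfeldtF0 r

lemma blichfeldt_poly_int (m : ℕ) (c₀ c₁ c₂ a b : ℝ) :
    ∫ x in a..b, (c₀ * x ^ m + c₁ * x ^ (m+1) + c₂ * x ^ (m+2)) =
      c₀ * (b ^ (m+1) - a ^ (m+1)) / ((m:ℝ)+1) + c₁ * (b ^ (m+2) - a ^ (m+2)) / ((m:ℝ)+2)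
        + c₂ * (b ^ (m+3) - a ^ (m+3)) / ((m:ℝ)+3) := by
  have h0 : IntervalIntegrable (fun x : ℝ => c₀ * x ^ m) volume a b :=
    (Continuous.intervalIntegrable (by continuity) a b)
  have h1 : IntervalIntegrable (fun x : ℝ => c₁ * x ^ (m+1)) volume a b :=
    (Continuous.intervalIntegrable (by continuity) a b)
  have h2 : IntervalIntegrable (fun x : ℝ => c₂ * x ^ (m+2)) volume a b :=
    (Continuous.intervalIntegrable (by continuity) a b)
  rw [intervalIntegral.integral_add (h0.add h1) h2, intervalIntegral.integral_add h0 h1,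
    intervalIntegral.integral_const_mul, intervalIntegral.integral_const_mul,
    intervalIntegral.integral_const_mul, integral_pow, integral_pow, integral_pow]
  push_cast
  ring

lemma blichfeldt_ii_of_eqOn {f g : ℝ → ℝ} {a b : ℝ} (hab : a ≤ b) (hg : Continuous g)
    (h : Set.EqOn f g (Set.Ioc a b)) : IntervalIntegrable f volume a b := by
  rw [intervalIntegrable_iff_integrableOn_Ioc_of_le hab]
  exact (hg.integrableOn_Ioc).congr_fun h.symm measurableSet_Ioc


set_option maxHeartbeats 1000000 in
/-- For the Blichfeldt gauge `f*` one has
`Iₙ(f*) = (2 vol(Bⁿ)/(n+2)) · 2^{n/2} · (1 + bₙ)`, where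
`bₙ = 1/(2^{n/2}(n+1)) - (√2-1)^{n+1}(1 + √2/(n+1))`. -/
theorem integral_blichfeldtFStar (n : ℕ) (hn : 1 ≤ n) :
    (∫ x : EuclideanSpace ℝ (Fin n), blichfeldtFStar ‖x‖)
      = 2 * (volume (Metric.closedBall (0 : EuclideanSpace ℝ (Fin n)) 1)).toReal / ((n : ℝ) + 2)
        * (2 : ℝ) ^ ((n : ℝ) / 2)
        * (1 + (1 / ((2 : ℝ) ^ ((n : ℝ) / 2) * ((n : ℝ) + 1))
            - (Real.sqrt 2 - 1) ^ (n + 1) * (1 + Real.sqrt 2 / ((n : ℝ) + 1)))) := by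
  obtain ⟨m, rfl⟩ : ∃ m, n = m + 1 := ⟨n - 1, (Nat.succ_pred_eq_of_pos hn).symm⟩
  haveI : Nonempty (Fin (m+1)) := ⟨⟨0, Nat.succ_pos m⟩⟩
  rw [Measure.addHaar_closedBall_eq_addHaar_ball,
    integral_fun_norm_addHaar volume blichfeldtFStar, finrank_euclideanSpace_fin]
  simp only [Nat.add_sub_cancel, smul_eq_mul, nsmul_eq_mul]
  set s := Real.sqrt 2 with hsdef
  have hs : s ^ 2 = 2 := Real.sq_sqrt (by norm_num)
  have hs0 : 0 ≤ s := Real.sqrt_nonneg 2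
  have hs1 : 1 < s := by nlinarith
  have hs2 : s < 2 := by nlinarith
  -- piecewise descriptions
  have e1 : Set.EqOn (fun y : ℝ => y ^ m * blichfeldtFStar y)
      (fun y => 1 * y ^ m + 0 * y ^ (m+1) + 0 * y ^ (m+2)) (Set.Icc 0 (2 - s)) := by
    intro y hy
    have hy1 : y ≤ 1 := by linarith [hy.2]
    have h0 : blichfeldtF0 (2 - y) = 0 := by
      unfold blichfeldtF0
      split
      · have hys : 2 - y = s := le_antisymm (by assumption) (by linarith [hy.2])
        rw [hys, hs]; norm_num
      · rfl
    simp only [blichfeldtFStar, if_pos hy1, h0]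
    ring
  have e2 : Set.EqOn (fun y : ℝ => y ^ m * blichfeldtFStar y)
      (fun y => 2 * y ^ m + (-2) * y ^ (m+1) + (1/2) * y ^ (m+2)) (Set.Icc (2 - s) 1) := by
    intro y hy
    have hy1 : y ≤ 1 := hy.2
    have h2y : 2 - y ≤ s := by linarith [hy.1]
    simp only [blichfeldtFStar, blichfeldtF0, ← hsdef, if_pos hy1, if_pos h2y]
    ring
  have e3 : Set.EqOn (fun y : ℝ => y ^ m * blichfeldtFStar y)
      (fun y => 1 * y ^ m + 0 * y ^ (m+1) + (-(1/2)) * y ^ (m+2)) (Set.Icc 1 s) := by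
    intro y hy
    have hys : y ≤ s := hy.2
    by_cases hy1 : y ≤ 1
    · have hye : y = 1 := le_antisymm hy1 hy.1
      subst hye
      simp only [blichfeldtFStar, blichfeldtF0, if_pos hy1,
        if_pos (show (2:ℝ) - 1 ≤ s from by linarith)]
      norm_num
    · simp only [blichfeldtFStar, blichfeldtF0, ← hsdef, if_neg hy1, if_pos hys]
      ring
  have ha0 : (0:ℝ) ≤ 2 - s := by linarith
  have ha1 : 2 - s ≤ 1 := by linarith
  have h1s : (1:ℝ) ≤ s := le_of_lt hs1
  -- restrict integral to Ioc 0 s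
  have hres : (∫ y in Set.Ioi (0:ℝ), y ^ m * blichfeldtFStar y)
      = ∫ y in Set.Ioc (0:ℝ) s, y ^ m * blichfeldtFStar y := by
    have h := setIntegral_eq_of_subset_of_forall_diff_eq_zero (μ := volume)
      (f := fun y => y ^ m * blichfeldtFStar y) (s := Set.Ioc (0:ℝ) s) (t := Set.Ioi (0:ℝ))
      measurableSet_Ioi Set.Ioc_subset_Ioi_self ?_
    · simpa using h
    · intro y hy
      obtain ⟨hy0, hy1⟩ := hy
      have hys : s < y := by
        by_contra h
        exact hy1 ⟨hy0, not_lt.mp h⟩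
      have hgt1 : ¬ y ≤ 1 := by push_neg; linarith
      have hgts : ¬ y ≤ s := not_le.mpr hys
      simp only [blichfeldtFStar, blichfeldtF0, ← hsdef, if_neg hgt1, if_neg hgts, mul_zero]
  -- integrability on the pieces
  have hii1 : IntervalIntegrable (fun y : ℝ => y ^ m * blichfeldtFStar y) volume 0 (2 - s) :=
    blichfeldt_ii_of_eqOn ha0 (by continuity) (fun y hy => e1 (Set.Ioc_subset_Icc_self hy))
  have hii2 : IntervalIntegrable (fun y : ℝ => y ^ m * blichfeldtFStar y) volume (2 - s) 1 :=
    blichfeldt_ii_of_eqOn ha1 (by continuity) (fun y hy => e2 (Set.Ioc_subset_Icc_self hy))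
  have hii3 : IntervalIntegrable (fun y : ℝ => y ^ m * blichfeldtFStar y) volume 1 s :=
    blichfeldt_ii_of_eqOn h1s (by continuity) (fun y hy => e3 (Set.Ioc_subset_Icc_self hy))
  have hsplit : (∫ y in Set.Ioc (0:ℝ) s, y ^ m * blichfeldtFStar y) =
      (∫ y in (0:ℝ)..(2-s), y ^ m * blichfeldtFStar y)
        + (∫ y in (2-s)..1, y ^ m * blichfeldtFStar y)
        + (∫ y in (1:ℝ)..s, y ^ m * blichfeldtFStar y) := by
    rw [← intervalIntegral.integral_of_le (by linarith : (0:ℝ) ≤ s),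
      ← intervalIntegral.integral_add_adjacent_intervals (hii1.trans hii2) hii3,
      ← intervalIntegral.integral_add_adjacent_intervals hii1 hii2]
  have hu1 : Set.uIcc (0:ℝ) (2-s) = Set.Icc 0 (2-s) := Set.uIcc_of_le ha0
  have hu2 : Set.uIcc (2-s) (1:ℝ) = Set.Icc (2-s) 1 := Set.uIcc_of_le ha1
  have hu3 : Set.uIcc (1:ℝ) s = Set.Icc 1 s := Set.uIcc_of_le h1s
  have hI1 : (∫ y in (0:ℝ)..(2-s), y ^ m * blichfeldtFStar y) =
      1 * ((2-s) ^ (m+1) - 0 ^ (m+1)) / ((m:ℝ)+1) + 0 * ((2-s) ^ (m+2) - 0 ^ (m+2)) / ((m:ℝ)+2)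
        + 0 * ((2-s) ^ (m+3) - 0 ^ (m+3)) / ((m:ℝ)+3) := by
    rw [intervalIntegral.integral_congr (by rw [hu1]; exact e1), blichfeldt_poly_int]
  have hI2 : (∫ y in (2-s)..1, y ^ m * blichfeldtFStar y) =
      2 * ((1:ℝ) ^ (m+1) - (2-s) ^ (m+1)) / ((m:ℝ)+1)
        + (-2) * ((1:ℝ) ^ (m+2) - (2-s) ^ (m+2)) / ((m:ℝ)+2)
        + (1/2) * ((1:ℝ) ^ (m+3) - (2-s) ^ (m+3)) / ((m:ℝ)+3) := by
    rw [intervalIntegral.integral_congr (by rw [hu2]; exact e2), blichfeldt_poly_int]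
  have hI3 : (∫ y in (1:ℝ)..s, y ^ m * blichfeldtFStar y) =
      1 * (s ^ (m+1) - (1:ℝ) ^ (m+1)) / ((m:ℝ)+1) + 0 * (s ^ (m+2) - (1:ℝ) ^ (m+2)) / ((m:ℝ)+2)
        + (-(1/2)) * (s ^ (m+3) - (1:ℝ) ^ (m+3)) / ((m:ℝ)+3) := by
    rw [intervalIntegral.integral_congr (by rw [hu3]; exact e3), blichfeldt_poly_int]
  rw [hres, hsplit, hI1, hI2, hI3]
  -- final algebra
  have hpow : (2:ℝ) ^ ((((m+1 : ℕ)):ℝ) / 2) = s ^ (m+1) := by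
    have he : (((m+1 : ℕ)):ℝ)/2 = (1/2) * (((m+1 : ℕ)):ℝ) := by ring
    rw [he, Real.rpow_mul (by norm_num : (0:ℝ) ≤ 2), Real.rpow_natCast, hsdef,
      Real.sqrt_eq_rpow]
  rw [hpow]
  have hfact : (2:ℝ) - s = s * (s - 1) := by linear_combination -hs
  have hA1 : ((2:ℝ) - s) ^ (m+1) = s ^ (m+1) * (s-1) ^ (m+1) := by rw [hfact, mul_pow]
  have hA2 : ((2:ℝ) - s) ^ (m+2) = (2 - s) * (s ^ (m+1) * (s-1) ^ (m+1)) := by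
    rw [pow_succ, hA1]; ring
  have hA3 : ((2:ℝ) - s) ^ (m+3) = (6 - 4*s) * (s ^ (m+1) * (s-1) ^ (m+1)) := by
    have h6 : ((2:ℝ) - s) ^ 2 = 6 - 4*s := by linear_combination hs
    calc ((2:ℝ) - s) ^ (m+3) = ((2-s))^(m+1) * (2-s)^2 := by ring
    _ = (6 - 4*s) * (s ^ (m+1) * (s-1) ^ (m+1)) := by rw [hA1, h6]; ring
  have hs3 : s ^ (m+3) = 2 * s ^ (m+1) := by
    calc s ^ (m+3) = s^(m+1) * s^2 := by ring
    _ = 2 * s^(m+1) := by rw [hs]; ring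
  rw [hA1, hA2, hA3, hs3]
  obtain ⟨P, hP⟩ : ∃ P, s ^ (m+1) = P := ⟨_, rfl⟩
  obtain ⟨R, hR⟩ : ∃ R, (s-1) ^ (m+1) = R := ⟨_, rfl⟩
  rw [hP]
  have hM1 : ((m:ℝ)+1) ≠ 0 := by positivity
  have hM2 : ((m:ℝ)+1+1) ≠ 0 := by positivity
  have hM3 : ((m:ℝ)+1+2) ≠ 0 := by positivity
  have hPne : P ≠ 0 := hP ▸ pow_ne_zero _ (by linarith : s ≠ 0)
  push_cast
  have hkey : (s-1) ^ (m+1+1) * (1 + s/((m:ℝ)+1+1))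
      = (s-1)*R + (2-s)*R/((m:ℝ)+1+1) := by
    have h1 : (s-1) ^ (m+1+1) = (s-1)*R := by rw [← hR]; ring
    rw [h1]
    linear_combination (R/((m:ℝ)+1+1)) * hs
  rw [hkey, hR]
  simp only [measureReal_def]
  field_simp
  ring
end

section
/- If K is a convex body in R^n and f is a Blichfeldt gauge for the unit ball B^n, then for any 0 < ρ ≤ r(K) the function g_ρ(x) = f(d(x, K_{-ρ})/ρ) is a Blichfeldt gauge for K, i.e., for any packing {φ_i K} by isometries one has ∑_i g_ρ(φ_i^{-1}(x)) ≤ 1 for all x. -/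
open MeasureTheory
open scoped ENNReal

/-- If `f` is a Blichfeldt gauge for the unit ball `Bⁿ` (that is, for every packing of unit
balls with centers `cᵢ` one has `∑ᵢ f(|x - cᵢ|) ≤ 1`, with `f` nonnegative, measurable and of
finite integral), `K` is a convex body, and `0 < ρ ≤ r(K)` (i.e. some ball of radius `ρ` fits
inside `K`), then `g_ρ(x) = f(d(x, K₋ρ)/ρ)` is a Blichfeldt gauge for `K`: for every packing
`{φᵢ K}` by isometries, `∑ᵢ g_ρ(φᵢ⁻¹(x)) ≤ 1` for all `x`. -/
theorem gauge_transfer (n : ℕ) (f : ℝ → ℝ)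
    (hf0 : ∀ r, 0 ≤ f r) (hfm : Measurable f)
    (hfi : Integrable fun x : EuclideanSpace ℝ (Fin n) => f ‖x‖)
    (hgauge : ∀ c : ℕ → EuclideanSpace ℝ (Fin n),
      (Pairwise fun i j => 2 ≤ dist (c i) (c j)) →
      ∀ x : EuclideanSpace ℝ (Fin n), (∑' i : ℕ, f (dist x (c i))) ≤ 1)
    (K : Set (EuclideanSpace ℝ (Fin n))) (hKc : IsCompact K) (hKconv : Convex ℝ K)
    (hKint : (interior K).Nonempty)
    (ρ : ℝ) (hρ : 0 < ρ) (hρK : ∃ c : EuclideanSpace ℝ (Fin n), Metric.closedBall c ρ ⊆ K)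
    (φ : ℕ → (EuclideanSpace ℝ (Fin n) ≃ᵢ EuclideanSpace ℝ (Fin n)))
    (hφ : IsPacking K φ) (x : EuclideanSpace ℝ (Fin n)) :
    (∑' i : ℕ,
        f (Metric.infDist ((φ i).symm x) {z : EuclideanSpace ℝ (Fin n) |
          Metric.closedBall z ρ ⊆ K} / ρ)) ≤ 1 := by
  set S : Set (EuclideanSpace ℝ (Fin n)) :=
    {z : EuclideanSpace ℝ (Fin n) | Metric.closedBall z ρ ⊆ K} with hS
  have hSne : S.Nonempty := hρK
  have hSclosed : IsClosed S := by
    have : S = ⋂ v ∈ Metric.closedBall (0 : EuclideanSpace ℝ (Fin n)) ρ,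
        {z : EuclideanSpace ℝ (Fin n) | z + v ∈ K} := by
      ext z
      simp only [hS, Set.mem_setOf_eq, Set.mem_iInter, Metric.mem_closedBall,
        dist_zero_right, Set.subset_def, Metric.mem_closedBall]
      constructor
      · intro h v hv; exact h (z + v) (by simpa [dist_eq_norm] using hv)
      · intro h y hy
        have := h (y - z) (by simpa [dist_eq_norm, norm_sub_rev] using hy)
        simpa using this
    rw [this]
    exact isClosed_biInter fun v _ =>
      hKc.isClosed.preimage (continuous_id.add continuous_const)
  -- choose nearest points
  have hex : ∀ i : ℕ, ∃ z ∈ S, Metric.infDist ((φ i).symm x) S = dist ((φ i).symm x) z :=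
    fun i => hSclosed.exists_infDist_eq_dist hSne ((φ i).symm x)
  choose z hzS hzd using hex
  set c : ℕ → EuclideanSpace ℝ (Fin n) := fun i => ρ⁻¹ • (φ i (z i)) with hc
  -- balls around φ i (z i) are inside interiors of copies
  have hball : ∀ i, Metric.ball (φ i (z i)) ρ ⊆ interior (φ i '' K) := by
    intro i
    apply interior_maximal _ Metric.isOpen_ball
    refine Metric.ball_subset_closedBall.trans ?_
    rw [← (φ i).image_closedBall]
    exact Set.image_mono (hzS i)
  have hdist : ∀ i j, i ≠ j → 2 * ρ ≤ dist (φ i (z i)) (φ j (z j)) := by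
    intro i j hij
    by_contra hlt
    push_neg at hlt
    have hd := (hφ hij).mono (hball i) (hball j)
    set m := midpoint ℝ (φ i (z i)) (φ j (z j))
    have h1 : m ∈ Metric.ball (φ i (z i)) ρ := by
      rw [Metric.mem_ball, dist_midpoint_left]
      calc ‖(2:ℝ)‖⁻¹ * dist (φ i (z i)) (φ j (z j)) < ‖(2:ℝ)‖⁻¹ * (2 * ρ) := by
            apply mul_lt_mul_of_pos_left hlt; norm_num
        _ = ρ := by rw [Real.norm_ofNat]; ring
    have h2 : m ∈ Metric.ball (φ j (z j)) ρ := by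
      rw [Metric.mem_ball, dist_midpoint_right]
      calc ‖(2:ℝ)‖⁻¹ * dist (φ i (z i)) (φ j (z j)) < ‖(2:ℝ)‖⁻¹ * (2 * ρ) := by
            apply mul_lt_mul_of_pos_left hlt; norm_num
        _ = ρ := by rw [Real.norm_ofNat]; ring
    exact Set.disjoint_left.mp hd h1 h2
  have hcpair : Pairwise fun i j => 2 ≤ dist (c i) (c j) := by
    intro i j hij
    have : dist (c i) (c j) = ‖ρ⁻¹‖ * dist (φ i (z i)) (φ j (z j)) := dist_smul₀ _ _ _
    rw [this, Real.norm_eq_abs, abs_of_pos (inv_pos.mpr hρ)]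
    calc (2:ℝ) = ρ⁻¹ * (2 * ρ) := by field_simp
      _ ≤ ρ⁻¹ * dist (φ i (z i)) (φ j (z j)) :=
          mul_le_mul_of_nonneg_left (hdist i j hij) (le_of_lt (inv_pos.mpr hρ))
  have key := hgauge c hcpair (ρ⁻¹ • x)
  have heq : ∀ i, f (Metric.infDist ((φ i).symm x) S / ρ) = f (dist (ρ⁻¹ • x) (c i)) := by
    intro i
    congr 1
    rw [hzd i, hc]
    have : dist (ρ⁻¹ • x) (ρ⁻¹ • φ i (z i)) = ‖ρ⁻¹‖ * dist x (φ i (z i)) := dist_smul₀ _ _ _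
    rw [this, Real.norm_eq_abs, abs_of_pos (inv_pos.mpr hρ)]
    have : dist x (φ i (z i)) = dist ((φ i).symm x) (z i) := by
      rw [← (φ i).symm.dist_eq x (φ i (z i))]
      simp
    rw [this, div_eq_inv_mul]
  calc (∑' i : ℕ, f (Metric.infDist ((φ i).symm x) S / ρ))
      = ∑' i : ℕ, f (dist (ρ⁻¹ • x) (c i)) := tsum_congr heq
    _ ≤ 1 := key
end

section
/- Let K ⊂ R^n be a convex body and f : [0,∞) → [0,∞) measurable with compact support. Then ∫_{R^n} f(d(x, K)/ρ) dx = ∑_{j=0}^{n} ρ^j · I_j(f) · V_{n-j}(K), where I_j(f) = ∫_{R^j} f(|x|)dx for j ≥ 1, I_0(f) = f(0), and V_j denote the intrinsic volumes. -/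
open MeasureTheory Set

lemma aux_int {μ : Measure ℝ} {g : ℝ → ℝ} (hm : Measurable g) {M b : ℝ}
    (hbd : ∀ s, |g s| ≤ M) (hz : ∀ s, b < s → g s = 0) (hfin : μ (Set.Iic b) < ⊤) :
    Integrable g μ := by
  refine Integrable.mono' (g := (Set.Iic b).indicator fun _ => M) ?_ hm.aestronglyMeasurable
    (Filter.Eventually.of_forall ?_)
  · exact (integrable_indicator_iff measurableSet_Iic).2 (integrableOn_const hfin.ne)
  · intro s
    by_cases h : s ≤ b
    · simpa [Set.indicator_of_mem, h] using hbd s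
    · push_neg at h
      rw [Set.indicator_of_notMem (by simpa using not_le.2 h)]
      simp [hz s h]

lemma aux_restrict {μ : Measure ℝ} {g : ℝ → ℝ} {b : ℝ} (hz : ∀ s, b < s → g s = 0) :
    ∫ s, g s ∂(μ.restrict (Set.Iic b)) = ∫ s, g s ∂μ := by
  rw [← integral_indicator measurableSet_Iic]
  congr 1
  ext s
  by_cases h : s ≤ b
  · simp [Set.indicator, h]
  · push_neg at h
    simp [Set.indicator, h, hz s h, not_le.2 h]

/-- The generalized Steiner formula: if `K ⊆ ℝⁿ` is a convex body, `f : [0,∞) → [0,∞)` is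
measurable, bounded and compactly supported, and the `Vⱼ` are the intrinsic volumes of `K`
(defined via the Steiner formula `vol(K + λBⁿ) = ∑ⱼ λ^{n-j} κ_{n-j} Vⱼ(K)`), then
`∫_{ℝⁿ} f(d(x,K)/ρ) dx = ∑_{j=0}^{n} ρʲ Iⱼ(f) V_{n-j}(K)`, where `Iⱼ(f) = ∫_{ℝʲ} f(|x|) dx`
(and `I₀(f) = f(0)`, which is the integral over the one-point space `ℝ⁰`). -/
theorem integral_gauge_steiner (n : ℕ) (K : Set (EuclideanSpace ℝ (Fin n)))
    (hKc : IsCompact K) (hKconv : Convex ℝ K) (hKint : (interior K).Nonempty)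
    (f : ℝ → ℝ) (hf0 : ∀ r, 0 ≤ f r) (hfm : Measurable f)
    (M : ℝ) (hfb : ∀ r, f r ≤ M)
    (r0 : ℝ) (hsupp : ∀ r, r0 < r → f r = 0)
    (ρ : ℝ) (hρ : 0 < ρ)
    (V : ℕ → ℝ)
    (hV : ∀ lam : ℝ, 0 ≤ lam →
      (volume {x : EuclideanSpace ℝ (Fin n) | Metric.infDist x K ≤ lam}).toReal
        = ∑ j ∈ Finset.range (n + 1), lam ^ (n - j) *
            (volume (Metric.closedBall (0 : EuclideanSpace ℝ (Fin (n - j))) 1)).toReal * V j) :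
    (∫ x : EuclideanSpace ℝ (Fin n), f (Metric.infDist x K / ρ))
      = ∑ j ∈ Finset.range (n + 1), ρ ^ j *
          (∫ y : EuclideanSpace ℝ (Fin j), f ‖y‖) * V (n - j) := by
  classical
  have hKne : K.Nonempty := hKint.mono interior_subset
  -- the rescaled profile function
  set g : ℝ → ℝ := fun s => f (s / ρ) with hgdef
  have hgm : Measurable g := hfm.comp (measurable_id.div_const ρ)
  set b : ℝ := ρ * (max r0 0 + 1) with hbdef
  have hb0 : 0 < b := by
    have h1 : (0:ℝ) < max r0 0 + 1 := by positivity
    exact mul_pos hρ h1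
  have hgz : ∀ s, b < s → g s = 0 := by
    intro s hs
    apply hsupp
    have h1 : max r0 0 + 1 < s / ρ := by
      rw [lt_div_iff₀ hρ]
      calc (max r0 0 + 1) * ρ = b := by rw [hbdef]; ring
      _ < s := hs
    have h2 : r0 ≤ max r0 0 := le_max_left _ _
    linarith
  have hgbd : ∀ s, |g s| ≤ M := fun s => by
    simp only [hgdef]
    rw [abs_of_nonneg (hf0 _)]; exact hfb _
  -- the measures
  set ν : Measure ℝ :=
    Measure.map (fun x : EuclideanSpace ℝ (Fin n) => Metric.infDist x K) volume with hνdef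
  set W : ℕ → Measure ℝ :=
    fun j => Measure.map (fun y : EuclideanSpace ℝ (Fin j) => ‖y‖) volume with hWdef
  set κ : ℕ → ℝ :=
    fun j => (volume (Metric.closedBall (0 : EuclideanSpace ℝ (Fin j)) 1)).toReal with hκdef
  have hκ0 : ∀ j, 0 ≤ κ j := fun j => ENNReal.toReal_nonneg
  -- values of W j on Iic
  have hWm : ∀ (j : ℕ) (t : ℝ),
      W j (Set.Iic t) = volume {y : EuclideanSpace ℝ (Fin j) | ‖y‖ ≤ t} := by
    intro j t
    simp only [hWdef]
    rw [Measure.map_apply measurable_norm measurableSet_Iic]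
    rfl
  have hWpos : ∀ (j : ℕ) (t : ℝ), 0 ≤ t → W j (Set.Iic t) = ENNReal.ofReal (t ^ j * κ j) := by
    intro j t ht
    rw [hWm]
    have hset : {y : EuclideanSpace ℝ (Fin j) | ‖y‖ ≤ t} = Metric.closedBall 0 t := by
      ext y; simp [Metric.mem_closedBall, dist_zero_right]
    rw [hset, Measure.addHaar_closedBall' volume 0 ht, finrank_euclideanSpace_fin,
      ENNReal.ofReal_mul (by positivity)]
    simp only [hκdef]
    rw [ENNReal.ofReal_toReal measure_closedBall_lt_top.ne]
  have hWneg : ∀ (j : ℕ) (t : ℝ), t < 0 → W j (Set.Iic t) = 0 := by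
    intro j t ht
    rw [hWm]
    have hset : {y : EuclideanSpace ℝ (Fin j) | ‖y‖ ≤ t} = ∅ := by
      ext y; simp only [mem_setOf_eq, mem_empty_iff_false, iff_false, not_le]
      exact lt_of_lt_of_le ht (norm_nonneg y)
    simp [hset]
  -- values of ν on Iic
  have hνm : ∀ t : ℝ, ν (Set.Iic t)
      = volume {x : EuclideanSpace ℝ (Fin n) | Metric.infDist x K ≤ t} := by
    intro t
    rw [hνdef, Measure.map_apply (Metric.continuous_infDist_pt K).measurable measurableSet_Iic]
    rfl
  have hνneg : ∀ t : ℝ, t < 0 → ν (Set.Iic t) = 0 := by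
    intro t ht
    rw [hνm]
    have hset : {x : EuclideanSpace ℝ (Fin n) | Metric.infDist x K ≤ t} = ∅ := by
      ext x; simp only [mem_setOf_eq, mem_empty_iff_false, iff_false, not_le]
      exact lt_of_lt_of_le ht Metric.infDist_nonneg
    simp [hset]
  have hfin : ∀ t : ℝ,
      volume {x : EuclideanSpace ℝ (Fin n) | Metric.infDist x K ≤ t} < ⊤ := by
    intro t
    rcases lt_or_ge t 0 with ht | ht
    · have hset : {x : EuclideanSpace ℝ (Fin n) | Metric.infDist x K ≤ t} = ∅ := by
        ext x; simp only [mem_setOf_eq, mem_empty_iff_false, iff_false, not_le]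
        exact lt_of_lt_of_le ht Metric.infDist_nonneg
      simp [hset]
    · refine lt_of_le_of_lt (measure_mono ?_) (hKc.cthickening (r := t)).measure_lt_top
      intro x hx
      rw [Metric.mem_cthickening_iff,
        ENNReal.le_ofReal_iff_toReal_le (Metric.infEdist_ne_top hKne) ht]
      exact hx
  -- coefficients
  set c : ℕ → ℝ := fun j => V (n - j) with hcdef
  set p : ℕ → ℝ := fun j => max (c j) 0 with hpdef
  set q : ℕ → ℝ := fun j => max (-(c j)) 0 with hqdef
  have hp0 : ∀ j, 0 ≤ p j := fun j => le_max_right _ _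
  have hq0 : ∀ j, 0 ≤ q j := fun j => le_max_right _ _
  have hpq : ∀ j, c j + q j = p j := by
    intro j
    simp only [hpdef, hqdef]
    rcases le_total (c j) 0 with h | h
    · rw [max_eq_right h, max_eq_left (by linarith : (0:ℝ) ≤ -(c j))]; ring
    · rw [max_eq_left h, max_eq_right (by linarith : -(c j) ≤ 0)]; ring
  -- the polynomial formula, reindexed
  have hP : ∀ t : ℝ, 0 ≤ t →
      (volume {x : EuclideanSpace ℝ (Fin n) | Metric.infDist x K ≤ t}).toReal
        = ∑ j ∈ Finset.range (n + 1), t ^ j * κ j * c j := by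
    intro t ht
    rw [hV t ht, ← Finset.sum_range_reflect (fun j => t ^ j * κ j * c j) (n + 1)]
    refine Finset.sum_congr rfl ?_
    intro j hj
    simp only [Finset.mem_range] at hj
    have h1 : n + 1 - 1 - j = n - j := by omega
    have h2 : n - (n - j) = j := by omega
    rw [h1]
    simp only [hcdef, hκdef, h2]
  have hνval : ∀ t : ℝ, 0 ≤ t →
      ν (Set.Iic t) = ENNReal.ofReal (∑ j ∈ Finset.range (n + 1), t ^ j * κ j * c j) := by
    intro t ht
    rw [hνm, ← ENNReal.ofReal_toReal (hfin t).ne, hP t ht]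
  have hPnonneg : ∀ t : ℝ, 0 ≤ t →
      0 ≤ ∑ j ∈ Finset.range (n + 1), t ^ j * κ j * c j := by
    intro t ht
    rw [← hP t ht]
    exact ENNReal.toReal_nonneg
  -- the measure identity
  set S : Set ℝ := Set.Iic b with hSdef
  set μ1 : Measure ℝ :=
    ν.restrict S + ∑ j ∈ Finset.range (n + 1), ENNReal.ofReal (q j) • ((W j).restrict S)
    with hμ1def
  set μ2 : Measure ℝ :=
    ∑ j ∈ Finset.range (n + 1), ENNReal.ofReal (p j) • ((W j).restrict S) with hμ2def
  have hνSfin : ν S < ⊤ := by rw [hSdef, hνm]; exact hfin b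
  have hWSfin : ∀ j, W j S < ⊤ := by
    intro j
    rw [hSdef, hWpos j b hb0.le]
    exact ENNReal.ofReal_lt_top
  haveI : IsFiniteMeasure μ1 := by
    constructor
    rw [hμ1def]
    simp only [Measure.add_apply, Measure.finset_sum_apply, Measure.smul_apply,
      Measure.restrict_apply_univ, smul_eq_mul]
    refine ENNReal.add_lt_top.2 ⟨hνSfin, ?_⟩
    refine ENNReal.sum_lt_top.2 ?_
    intro j _
    exact ENNReal.mul_lt_top ENNReal.ofReal_lt_top (hWSfin j)
  have hμeq : μ1 = μ2 := by
    refine Measure.ext_of_Iic μ1 μ2 ?_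
    intro t
    have hmin : Set.Iic t ∩ S = Set.Iic (min t b) := by rw [hSdef]; exact Set.Iic_inter_Iic
    rw [hμ1def, hμ2def]
    simp only [Measure.add_apply, Measure.finset_sum_apply, Measure.smul_apply,
      Measure.restrict_apply measurableSet_Iic, hmin, smul_eq_mul]
    rcases lt_or_ge (min t b) 0 with hm | hm
    · rw [hνneg _ hm]
      simp [hWneg _ _ hm]
    · rw [hνval _ hm]
      have hterm : ∀ j, W j (Set.Iic (min t b)) = ENNReal.ofReal ((min t b) ^ j * κ j) :=
        fun j => hWpos j _ hm
      simp only [hterm]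
      have key : ∀ r : ℕ → ℝ, (∀ j, 0 ≤ r j) →
          ∑ j ∈ Finset.range (n + 1),
              ENNReal.ofReal (r j) * ENNReal.ofReal ((min t b) ^ j * κ j)
            = ENNReal.ofReal
                (∑ j ∈ Finset.range (n + 1), r j * ((min t b) ^ j * κ j)) := by
        intro r hr
        rw [ENNReal.ofReal_sum_of_nonneg (fun i _ =>
          mul_nonneg (hr i) (mul_nonneg (pow_nonneg hm i) (hκ0 i)))]
        exact Finset.sum_congr rfl fun i _ => (ENNReal.ofReal_mul (hr i)).symm
      rw [key q hq0, key p hp0,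
        ← ENNReal.ofReal_add (hPnonneg _ hm)
          (Finset.sum_nonneg fun j _ =>
            mul_nonneg (hq0 j) (mul_nonneg (pow_nonneg hm j) (hκ0 j)))]
      congr 1
      rw [← Finset.sum_add_distrib]
      refine Finset.sum_congr rfl fun j _ => ?_
      calc (min t b) ^ j * κ j * c j + q j * ((min t b) ^ j * κ j)
          = (c j + q j) * ((min t b) ^ j * κ j) := by ring
        _ = p j * ((min t b) ^ j * κ j) := by rw [hpq j]
  -- integrability
  have hintν : Integrable g ν := aux_int hgm hgbd hgz (by rw [hνm]; exact hfin b)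
  have hintW : ∀ j, Integrable g (W j) := fun j =>
    aux_int hgm hgbd hgz (by rw [hWpos j b hb0.le]; exact ENNReal.ofReal_lt_top)
  have hintWS : ∀ (j : ℕ) (a : ℝ), Integrable g (ENNReal.ofReal a • ((W j).restrict S)) :=
    fun j a => ((hintW j).restrict).smul_measure ENNReal.ofReal_ne_top
  have hSb : S = Set.Iic b := hSdef
  have hI1 : ∫ s, g s ∂μ1
      = ∫ s, g s ∂ν + ∑ j ∈ Finset.range (n + 1), q j * ∫ s, g s ∂(W j) := by
    rw [hμ1def, integral_add_measure hintν.restrict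
      (integrable_finset_sum_measure.2 fun j _ => hintWS j (q j)),
      integral_finset_sum_measure fun j _ => hintWS j (q j)]
    congr 1
    · rw [hSb]; exact aux_restrict hgz
    · refine Finset.sum_congr rfl fun j _ => ?_
      rw [integral_smul_measure, ENNReal.toReal_ofReal (hq0 j), smul_eq_mul, hSb,
        aux_restrict hgz]
  have hI2 : ∫ s, g s ∂μ2 = ∑ j ∈ Finset.range (n + 1), p j * ∫ s, g s ∂(W j) := by
    rw [hμ2def, integral_finset_sum_measure fun j _ => hintWS j (p j)]
    refine Finset.sum_congr rfl fun j _ => ?_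
    rw [integral_smul_measure, ENNReal.toReal_ofReal (hp0 j), smul_eq_mul, hSb,
      aux_restrict hgz]
  have heq : ∫ s, g s ∂ν + ∑ j ∈ Finset.range (n + 1), q j * ∫ s, g s ∂(W j)
      = ∑ j ∈ Finset.range (n + 1), p j * ∫ s, g s ∂(W j) := by
    rw [← hI1, ← hI2, hμeq]
  have hsub : ∑ j ∈ Finset.range (n + 1), p j * ∫ s, g s ∂(W j)
      - ∑ j ∈ Finset.range (n + 1), q j * ∫ s, g s ∂(W j)
      = ∑ j ∈ Finset.range (n + 1), c j * ∫ s, g s ∂(W j) := by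
    rw [← Finset.sum_sub_distrib]
    refine Finset.sum_congr rfl fun j _ => ?_
    rw [← hpq j]
    ring
  have hmain : ∫ s, g s ∂ν = ∑ j ∈ Finset.range (n + 1), c j * ∫ s, g s ∂(W j) := by
    rw [← hsub]; linarith
  -- identify the integrals
  have hLHS : ∫ s, g s ∂ν = ∫ x : EuclideanSpace ℝ (Fin n), f (Metric.infDist x K / ρ) := by
    rw [hνdef, integral_map (Metric.continuous_infDist_pt K).measurable.aemeasurable
      hgm.aestronglyMeasurable]
  have hAj : ∀ j : ℕ, ∫ s, g s ∂(W j)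
      = ρ ^ j * ∫ y : EuclideanSpace ℝ (Fin j), f ‖y‖ := by
    intro j
    simp only [hWdef]
    rw [integral_map measurable_norm.aemeasurable hgm.aestronglyMeasurable]
    have hscale := MeasureTheory.Measure.integral_comp_smul_of_nonneg
      (volume : Measure (EuclideanSpace ℝ (Fin j)))
      (fun y : EuclideanSpace ℝ (Fin j) => f (‖y‖ / ρ)) ρ (hR := hρ.le)
    rw [finrank_euclideanSpace_fin] at hscale
    have hcomp : ∀ x : EuclideanSpace ℝ (Fin j), f (‖ρ • x‖ / ρ) = f ‖x‖ := by
      intro x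
      rw [norm_smul, Real.norm_eq_abs, abs_of_pos hρ, mul_div_cancel_left₀ _ hρ.ne']
    simp only [hcomp] at hscale
    simp only [hgdef]
    rw [hscale, smul_eq_mul, ← mul_assoc, mul_inv_cancel₀ (pow_ne_zero j hρ.ne'), one_mul]
  rw [← hLHS, hmain]
  refine Finset.sum_congr rfl fun j _ => ?_
  rw [hAj j]
  simp only [hcdef]
  ring
end
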